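/- arXiv:2205.08458 — 3 statements merged into one kernel-verified Lean document; each statement's English description precedes it below -/
import Mathlib

section
/- In the secure summation model with K ≥ 2 users, assuming security holds against the empty colluding set T = ∅, every user's message is independent of that user's own input: for every u ∈ {1,…,K}, I(X_u; W_u) = 0. -/
open MeasureTheory ProbabilityTheory

/-- Shannon entropy (in natural log units) of a finitely-valued random variable. -/
noncomputable def entr {Ω : Type*} [MeasurableSpace Ω] (μ : Measure Ω)
    {α : Type*} [Fintype α] [MeasurableSpace α] (X : Ω → α) : ℝ :=
  ∑ a : α, Real.negMulLog ((μ.map X) {a}).toReal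

/-- Conditional Shannon entropy `H(X | Y)`. -/
noncomputable def condEntr {Ω : Type*} [MeasurableSpace Ω] (μ : Measure Ω)
    {α β : Type*} [Fintype α] [MeasurableSpace α] [Fintype β] [MeasurableSpace β]
    (X : Ω → α) (Y : Ω → β) : ℝ :=
  entr μ (fun ω => (X ω, Y ω)) - entr μ Y

/-- Conditional mutual information `I(X ; Y | Z)`. -/
noncomputable def condMI {Ω : Type*} [MeasurableSpace Ω] (μ : Measure Ω)
    {α β γ : Type*} [Fintype α] [MeasurableSpace α] [Fintype β] [MeasurableSpace β]
    [Fintype γ] [MeasurableSpace γ] (X : Ω → α) (Y : Ω → β) (Z : Ω → γ) : ℝ :=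
  condEntr μ X Z + condEntr μ Y Z - condEntr μ (fun ω => (X ω, Y ω)) Z

/-- A random variable is uniformly distributed on a finite type. -/
def IsUnif {Ω : Type*} [MeasurableSpace Ω] (μ : Measure Ω)
    {α : Type*} [Fintype α] [MeasurableSpace α] (X : Ω → α) : Prop :=
  ∀ a : α, μ (X ⁻¹' {a}) = (Fintype.card α : ENNReal)⁻¹


/-- Mutual information `I(X ; Y)`. -/
noncomputable def mutInfo {Ω : Type*} [MeasurableSpace Ω] (μ : Measure Ω)
    {α β : Type*} [Fintype α] [MeasurableSpace α] [Fintype β] [MeasurableSpace β]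
    (X : Ω → α) (Y : Ω → β) : ℝ :=
  entr μ X + entr μ Y - entr μ (fun ω => (X ω, Y ω))

set_option maxHeartbeats 1000000
section auxlemmas
open Real Finset


/-- Core equality case of conditional mutual information for finite pmfs. -/
lemma core_fac {α β γ : Type*} [Fintype α] [Fintype β] [Fintype γ]
    (p : α → β → γ → ℝ) (hp : ∀ a b c, 0 ≤ p a b c)
    (hsum : ∑ a, ∑ b, ∑ c, p a b c = 1)
    (hMI : (∑ a, ∑ c, Real.negMulLog (∑ b, p a b c))
         + (∑ b, ∑ c, Real.negMulLog (∑ a, p a b c))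
         - (∑ a, ∑ b, ∑ c, Real.negMulLog (p a b c))
         - (∑ c, Real.negMulLog (∑ a, ∑ b, p a b c)) = 0) :
    ∀ a b c, p a b c * (∑ a', ∑ b', p a' b' c) = (∑ b', p a b' c) * (∑ a', p a' b c) := by
  classical
  set pac : α → γ → ℝ := fun a c => ∑ b, p a b c with hpac_def
  set pbc : β → γ → ℝ := fun b c => ∑ a, p a b c with hpbc_def
  set pc : γ → ℝ := fun c => ∑ a, ∑ b, p a b c with hpc_def
  have hpac0 : ∀ a c, 0 ≤ pac a c := fun a c => Finset.sum_nonneg fun b _ => hp a b c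
  have hpbc0 : ∀ b c, 0 ≤ pbc b c := fun b c => Finset.sum_nonneg fun a _ => hp a b c
  have hpc0 : ∀ c, 0 ≤ pc c := fun c =>
    Finset.sum_nonneg fun a _ => Finset.sum_nonneg fun b _ => hp a b c
  have hple_ac : ∀ a b c, p a b c ≤ pac a c := fun a b c =>
    Finset.single_le_sum (fun b _ => hp a b c) (Finset.mem_univ b)
  have hple_bc : ∀ a b c, p a b c ≤ pbc b c := fun a b c =>
    Finset.single_le_sum (fun a _ => hp a b c) (Finset.mem_univ a)
  have hac_le : ∀ a c, pac a c ≤ pc c := fun a c =>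
    Finset.single_le_sum (f := fun a => pac a c) (fun a _ => hpac0 a c) (Finset.mem_univ a)
  have hbsum : ∀ c, ∑ b, pbc b c = pc c := fun c => Finset.sum_comm
  -- the pointwise defect
  set d : α → β → γ → ℝ := fun a b c =>
    (p a b c * Real.log (p a b c * pc c / (pac a c * pbc b c)) - p a b c)
      + pac a c * pbc b c / pc c with hd_def
  have hd0 : ∀ a b c, 0 ≤ d a b c := by
    intro a b c
    rcases (hp a b c).eq_or_lt with h0 | hpos
    · simp only [hd_def, ← h0, zero_mul, sub_zero, zero_add]
      exact div_nonneg (mul_nonneg (hpac0 a c) (hpbc0 b c)) (hpc0 c)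
    · have hacpos : 0 < pac a c := lt_of_lt_of_le hpos (hple_ac a b c)
      have hbcpos : 0 < pbc b c := lt_of_lt_of_le hpos (hple_bc a b c)
      have hpcpos : 0 < pc c := lt_of_lt_of_le hacpos (hac_le a c)
      set r : ℝ := p a b c * pc c / (pac a c * pbc b c) with hr_def
      have hrpos : 0 < r := div_pos (mul_pos hpos hpcpos) (mul_pos hacpos hbcpos)
      have hkey : pac a c * pbc b c / pc c = p a b c / r := by
        rw [hr_def]
        field_simp
      have hlog : 1 - r⁻¹ ≤ Real.log r := by
        have := Real.log_le_sub_one_of_pos (inv_pos.2 hrpos)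
        rw [Real.log_inv] at this; linarith
      simp only [hd_def]
      rw [← hr_def, hkey]
      have h2 : p a b c * (1 - r⁻¹) ≤ p a b c * Real.log r :=
        mul_le_mul_of_nonneg_left hlog hpos.le
      have h3 : p a b c * (1 - r⁻¹) = p a b c - p a b c * r⁻¹ := by ring
      rw [div_eq_mul_inv]
      linarith
  have hdeq : ∀ a b c, d a b c = 0 → p a b c * pc c = pac a c * pbc b c := by
    intro a b c hd
    rcases (hp a b c).eq_or_lt with h0 | hpos
    · simp only [hd_def, ← h0, zero_mul, sub_zero, zero_add] at hd
      rw [← h0, zero_mul]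
      by_cases hpc : pc c = 0
      · have h1 : pac a c = 0 := le_antisymm (hpc ▸ hac_le a c) (hpac0 a c)
        rw [h1, zero_mul]
      · rcases div_eq_zero_iff.1 hd with h | h
        · exact h.symm
        · exact absurd h hpc
    · have hacpos : 0 < pac a c := lt_of_lt_of_le hpos (hple_ac a b c)
      have hbcpos : 0 < pbc b c := lt_of_lt_of_le hpos (hple_bc a b c)
      have hpcpos : 0 < pc c := lt_of_lt_of_le hacpos (hac_le a c)
      set r : ℝ := p a b c * pc c / (pac a c * pbc b c) with hr_def
      have hrpos : 0 < r := div_pos (mul_pos hpos hpcpos) (mul_pos hacpos hbcpos)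
      have hkey : pac a c * pbc b c / pc c = p a b c / r := by
        rw [hr_def]; field_simp
      simp only [hd_def] at hd
      rw [← hr_def, hkey, div_eq_mul_inv] at hd
      have hr1 : r = 1 := by
        by_contra hne
        have h1 : r⁻¹ ≠ 1 := fun h => hne (by rw [← inv_inv r, h, inv_one])
        have hlt := Real.log_lt_sub_one_of_pos (inv_pos.2 hrpos) h1
        rw [Real.log_inv] at hlt
        have h2 : p a b c * (1 - r⁻¹) < p a b c * Real.log r :=
          mul_lt_mul_of_pos_left (by linarith) hpos
        have h3 : p a b c * (1 - r⁻¹) = p a b c - p a b c * r⁻¹ := by ring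
        linarith
      have hr' : p a b c * pc c / (pac a c * pbc b c) = 1 := hr_def ▸ hr1
      field_simp at hr'
      linarith
  -- sum of ratio terms is 1
  have hT3 : ∑ a, ∑ b, ∑ c, pac a c * pbc b c / pc c = 1 := by
    have hcc : ∀ c, ∑ a, ∑ b, pac a c * pbc b c / pc c = pc c := by
      intro c
      by_cases hc : pc c = 0
      · have hpac' : ∀ a, pac a c = 0 := fun a =>
          le_antisymm (hc ▸ hac_le a c) (hpac0 a c)
        rw [hc]
        refine Finset.sum_eq_zero fun a _ => Finset.sum_eq_zero fun b _ => ?_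
        rw [hpac' a, zero_mul, zero_div]
      · calc ∑ a, ∑ b, pac a c * pbc b c / pc c
            = ∑ a, pac a c * pc c / pc c := by
              refine Finset.sum_congr rfl fun a _ => ?_
              rw [← Finset.sum_div, ← Finset.mul_sum, hbsum c]
          _ = ∑ a, pac a c := by
              refine Finset.sum_congr rfl fun a _ => ?_
              rw [mul_div_assoc, div_self hc, mul_one]
          _ = pc c := rfl
    calc ∑ a, ∑ b, ∑ c, pac a c * pbc b c / pc c
        = ∑ a, ∑ c, ∑ b, pac a c * pbc b c / pc c :=
          Finset.sum_congr rfl fun a _ => Finset.sum_comm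
      _ = ∑ c, ∑ a, ∑ b, pac a c * pbc b c / pc c := Finset.sum_comm
      _ = ∑ c, pc c := Finset.sum_congr rfl fun c _ => hcc c
      _ = ∑ a, ∑ c, ∑ b, p a b c := Finset.sum_comm
      _ = ∑ a, ∑ b, ∑ c, p a b c := Finset.sum_congr rfl fun a _ => Finset.sum_comm
      _ = 1 := hsum
  -- expansion of the log term
  have hlog_expand : ∀ a b c,
      p a b c * Real.log (p a b c * pc c / (pac a c * pbc b c))
        = p a b c * Real.log (p a b c) + p a b c * Real.log (pc c)
          - p a b c * Real.log (pac a c) - p a b c * Real.log (pbc b c) := by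
    intro a b c
    rcases (hp a b c).eq_or_lt with h0 | hpos
    · rw [← h0]; ring
    · have hacpos : 0 < pac a c := lt_of_lt_of_le hpos (hple_ac a b c)
      have hbcpos : 0 < pbc b c := lt_of_lt_of_le hpos (hple_bc a b c)
      have hpcpos : 0 < pc c := lt_of_lt_of_le hacpos (hac_le a c)
      rw [Real.log_div (by positivity) (by positivity),
        Real.log_mul hpos.ne' hpcpos.ne', Real.log_mul hacpos.ne' hbcpos.ne']
      ring
  -- the four entropy-sum identities
  have E1 : ∑ a, ∑ b, ∑ c, p a b c * Real.log (p a b c)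
      = -(∑ a, ∑ b, ∑ c, Real.negMulLog (p a b c)) := by
    simp [Real.negMulLog, Finset.sum_neg_distrib]
  have E2 : ∑ a, ∑ b, ∑ c, p a b c * Real.log (pc c)
      = -(∑ c, Real.negMulLog (pc c)) := by
    calc ∑ a, ∑ b, ∑ c, p a b c * Real.log (pc c)
        = ∑ a, ∑ c, ∑ b, p a b c * Real.log (pc c) :=
          Finset.sum_congr rfl fun a _ => Finset.sum_comm
      _ = ∑ c, ∑ a, ∑ b, p a b c * Real.log (pc c) := Finset.sum_comm
      _ = ∑ c, pc c * Real.log (pc c) := by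
          refine Finset.sum_congr rfl fun c _ => ?_
          rw [hpc_def]
          simp only [← Finset.sum_mul]
      _ = -(∑ c, Real.negMulLog (pc c)) := by
          simp [Real.negMulLog]
  have E3 : ∑ a, ∑ b, ∑ c, p a b c * Real.log (pac a c)
      = -(∑ a, ∑ c, Real.negMulLog (pac a c)) := by
    calc ∑ a, ∑ b, ∑ c, p a b c * Real.log (pac a c)
        = ∑ a, ∑ c, ∑ b, p a b c * Real.log (pac a c) :=
          Finset.sum_congr rfl fun a _ => Finset.sum_comm
      _ = ∑ a, ∑ c, pac a c * Real.log (pac a c) := by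
          refine Finset.sum_congr rfl fun a _ => Finset.sum_congr rfl fun c _ => ?_
          rw [hpac_def]
          simp only [← Finset.sum_mul]
      _ = -(∑ a, ∑ c, Real.negMulLog (pac a c)) := by
          simp [Real.negMulLog]
  have E4 : ∑ a, ∑ b, ∑ c, p a b c * Real.log (pbc b c)
      = -(∑ b, ∑ c, Real.negMulLog (pbc b c)) := by
    calc ∑ a, ∑ b, ∑ c, p a b c * Real.log (pbc b c)
        = ∑ b, ∑ a, ∑ c, p a b c * Real.log (pbc b c) := Finset.sum_comm
      _ = ∑ b, ∑ c, ∑ a, p a b c * Real.log (pbc b c) :=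
          Finset.sum_congr rfl fun b _ => Finset.sum_comm
      _ = ∑ b, ∑ c, pbc b c * Real.log (pbc b c) := by
          refine Finset.sum_congr rfl fun b _ => Finset.sum_congr rfl fun c _ => ?_
          rw [hpbc_def]
          simp only [← Finset.sum_mul]
      _ = -(∑ b, ∑ c, Real.negMulLog (pbc b c)) := by
          simp [Real.negMulLog]
  -- total defect is zero
  have hsumd : ∑ a, ∑ b, ∑ c, d a b c = 0 := by
    have hrw : ∀ a b c, d a b c
        = (((p a b c * Real.log (p a b c) + p a b c * Real.log (pc c)
            - p a b c * Real.log (pac a c) - p a b c * Real.log (pbc b c))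
          - p a b c) + pac a c * pbc b c / pc c) := by
      intro a b c
      rw [hd_def]
      dsimp only
      rw [hlog_expand a b c]
    simp only [hrw]
    simp only [Finset.sum_add_distrib, Finset.sum_sub_distrib]
    rw [E1, E2, E3, E4, hsum, hT3]
    linarith [hMI]
  -- each defect is zero
  intro a b c
  have hz1 : ∀ a' ∈ Finset.univ, (∑ b', ∑ c', d a' b' c') = 0 := by
    have := (Finset.sum_eq_zero_iff_of_nonneg (fun a' _ =>
      Finset.sum_nonneg fun b' _ => Finset.sum_nonneg fun c' _ => hd0 a' b' c')).1 hsumd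
    exact this
  have hz2 : ∀ b' ∈ Finset.univ, (∑ c', d a b' c') = 0 :=
    (Finset.sum_eq_zero_iff_of_nonneg (fun b' _ =>
      Finset.sum_nonneg fun c' _ => hd0 a b' c')).1 (hz1 a (Finset.mem_univ a))
  have hz3 : ∀ c' ∈ Finset.univ, d a b c' = 0 :=
    (Finset.sum_eq_zero_iff_of_nonneg (fun c' _ => hd0 a b c')).1 (hz2 b (Finset.mem_univ b))
  exact hdeq a b c (hz3 c (Finset.mem_univ c))


lemma core_indep {α β : Type*} [Fintype α] [Fintype β] (r : α → β → ℝ)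
    (hsum : ∑ a, ∑ b, r a b = 1)
    (hfac : ∀ a b, r a b = (∑ b', r a b') * (∑ a', r a' b)) :
    (∑ a, Real.negMulLog (∑ b, r a b)) + (∑ b, Real.negMulLog (∑ a, r a b))
      - (∑ a, ∑ b, Real.negMulLog (r a b)) = 0 := by
  classical
  set pA : α → ℝ := fun a => ∑ b, r a b with hpA
  set pB : β → ℝ := fun b => ∑ a, r a b with hpB
  have hsA : ∑ a, pA a = 1 := hsum
  have hsB : ∑ b, pB b = 1 := by
    rw [← hsum]; exact Finset.sum_comm
  have key : ∑ a, ∑ b, Real.negMulLog (r a b)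
      = (∑ a, Real.negMulLog (pA a)) + (∑ b, Real.negMulLog (pB b)) := by
    calc ∑ a, ∑ b, Real.negMulLog (r a b)
        = ∑ a, ∑ b, (pB b * Real.negMulLog (pA a) + pA a * Real.negMulLog (pB b)) := by
          refine Finset.sum_congr rfl fun a _ => Finset.sum_congr rfl fun b _ => ?_
          rw [hfac a b]
          exact Real.negMulLog_mul _ _
      _ = ∑ a, ((∑ b, pB b) * Real.negMulLog (pA a) + pA a * ∑ b, Real.negMulLog (pB b)) := by
          refine Finset.sum_congr rfl fun a _ => ?_
          rw [Finset.sum_add_distrib, ← Finset.sum_mul, ← Finset.mul_sum]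
      _ = (∑ a, Real.negMulLog (pA a)) + (∑ b, Real.negMulLog (pB b)) := by
          simp only [hsB, one_mul]
          rw [Finset.sum_add_distrib, ← Finset.sum_mul, hsA, one_mul]
  rw [key]; ring

section Bridge

variable {Ω : Type*} [MeasurableSpace Ω] {μ : Measure Ω} [IsProbabilityMeasure μ]

lemma pr_fiber {α : Type*} [Fintype α] [MeasurableSpace α] [MeasurableSingletonClass α]
    {A : Ω → α} (hA : Measurable A) {E : Set Ω} (hE : MeasurableSet E) :
    (μ E).toReal = ∑ a, (μ (A ⁻¹' {a} ∩ E)).toReal := by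
  rw [← ENNReal.toReal_sum (fun a _ => measure_ne_top μ _)]
  congr 1
  have hU : E = ⋃ a, A ⁻¹' {a} ∩ E := by
    ext ω; simp
  conv_lhs => rw [hU]
  rw [measure_iUnion]
  · exact tsum_fintype _
  · intro a a' haa'
    refine Set.disjoint_left.2 fun ω hω hω' => haa' ?_
    have h1 : A ω = a := hω.1
    have h2 : A ω = a' := hω'.1
    rw [← h1, h2]
  · exact fun a => (hA (measurableSet_singleton a)).inter hE

lemma entr_eq {α : Type*} [Fintype α] [MeasurableSpace α] [MeasurableSingletonClass α]
    {A : Ω → α} (hA : Measurable A) :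
    entr μ A = ∑ a, Real.negMulLog ((μ (A ⁻¹' {a})).toReal) := by
  unfold entr
  refine Finset.sum_congr rfl fun a _ => ?_
  rw [Measure.map_apply hA (measurableSet_singleton a)]

lemma pair_preimage {α γ : Type*} (A : Ω → α) (C : Ω → γ) (a : α) (c : γ) :
    (fun ω => (A ω, C ω)) ⁻¹' {(a, c)} = A ⁻¹' {a} ∩ C ⁻¹' {c} := by
  ext ω; simp [Prod.ext_iff]

end Bridge


lemma sum_update {K : ℕ} {V : Type*} [AddCommGroup V] [DecidableEq (Fin K)]
    (a : Fin K → V) (i : Fin K) (x : V) :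
    ∑ k, Function.update a i x k = (∑ k, a k) - a i + x := by
  rw [Finset.sum_update_of_mem (Finset.mem_univ i)]
  have h1 : ∑ k ∈ Finset.univ \ {i}, a k = (∑ k, a k) - a i := by
    rw [Finset.sum_sdiff_eq_sub (Finset.singleton_subset_iff.2 (Finset.mem_univ i)),
      Finset.sum_singleton]
  rw [h1]; abel

theorem aux
    {Ω : Type*} [MeasurableSpace Ω] (μ : Measure Ω) [IsProbabilityMeasure μ]
    {K : ℕ} (hK : 2 ≤ K)
    {V VX σ : Type*} [Fintype V] [AddCommGroup V] [MeasurableSpace V]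
    [MeasurableSingletonClass V]
    [Fintype VX] [MeasurableSpace VX] [MeasurableSingletonClass VX]
    [Fintype σ] [MeasurableSpace σ] [Unique σ]
    (W : Fin K → Ω → V) (X : Fin K → Ω → VX) (J : Ω → σ)
    (hWmeas : ∀ k, Measurable (W k)) (hXmeas : ∀ k, Measurable (X k))
    (hWunif : ∀ k (v : V), μ (W k ⁻¹' {v}) = (Fintype.card V : ENNReal)⁻¹)
    (hWindep : iIndepFun W μ)
    (hSec : condMI μ (fun ω => fun k => W k ω) (fun ω => fun k => X k ω)
      (fun ω => (∑ k, W k ω, J ω)) = 0)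
    (u : Fin K) :
    mutInfo μ (X u) (W u) = 0 := by
  classical
  haveI : Nonempty V := ⟨0⟩
  haveI instσ : MeasurableSingletonClass σ := by
    refine ⟨fun j => ?_⟩
    have : ({j} : Set σ) = Set.univ := Set.eq_univ_of_forall fun x => by
      simp [Subsingleton.elim x j]
    rw [this]; exact MeasurableSet.univ
  set S : Ω → V := fun ω => ∑ k, W k ω with hS_def
  set A : Ω → (Fin K → V) := fun ω => fun k => W k ω with hA_def
  set B : Ω → (Fin K → VX) := fun ω => fun k => X k ω with hB_def
  set C : Ω → V × σ := fun ω => (∑ k, W k ω, J ω) with hC_def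
  have hAmeas : Measurable A := measurable_pi_lambda _ hWmeas
  have hBmeas : Measurable B := measurable_pi_lambda _ hXmeas
  have hSmeas : Measurable S := (measurable_of_countable (fun v : Fin K → V => ∑ k, v k)).comp hAmeas
  have hJmeas : Measurable J := by
    intro s hs
    rcases Set.eq_empty_or_nonempty s with h | h
    · simp [h]
    · have : s = Set.univ := Set.eq_univ_of_forall fun x => by
        obtain ⟨y, hy⟩ := h
        rwa [Subsingleton.elim x y]
      simp [this]
  have hCmeas : Measurable C := by
    have : Measurable fun ω => (S ω, J ω) := hSmeas.prodMk hJmeas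
    exact this
  -- joint pmf
  set p : (Fin K → V) → (Fin K → VX) → (V × σ) → ℝ :=
    fun a b c => (μ (A ⁻¹' {a} ∩ (B ⁻¹' {b} ∩ C ⁻¹' {c}))).toReal with hp_def
  have hp0 : ∀ a b c, 0 ≤ p a b c := fun a b c => ENNReal.toReal_nonneg
  have hpbc : ∀ b c, ∑ a, p a b c = (μ (B ⁻¹' {b} ∩ C ⁻¹' {c})).toReal := by
    intro b c
    rw [pr_fiber hAmeas ((hBmeas (measurableSet_singleton b)).inter
      (hCmeas (measurableSet_singleton c)))]
  have hpac : ∀ a c, ∑ b, p a b c = (μ (A ⁻¹' {a} ∩ C ⁻¹' {c})).toReal := by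
    intro a c
    rw [pr_fiber hBmeas ((hAmeas (measurableSet_singleton a)).inter
      (hCmeas (measurableSet_singleton c)))]
    refine Finset.sum_congr rfl fun b _ => ?_
    rw [Set.inter_left_comm]
  have hpc : ∀ c, ∑ a, ∑ b, p a b c = (μ (C ⁻¹' {c})).toReal := by
    intro c
    rw [pr_fiber hAmeas (hCmeas (measurableSet_singleton c))]
    exact Finset.sum_congr rfl fun a _ => hpac a c
  have hptot : ∑ a, ∑ b, ∑ c, p a b c = 1 := by
    have h0 : (μ (Set.univ : Set Ω)).toReal = 1 := by simp
    rw [pr_fiber hAmeas MeasurableSet.univ] at h0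
    rw [← h0]
    refine Finset.sum_congr rfl fun a _ => ?_
    rw [pr_fiber hBmeas ((hAmeas (measurableSet_singleton a)).inter MeasurableSet.univ)]
    refine Finset.sum_congr rfl fun b _ => ?_
    rw [pr_fiber hCmeas (((hBmeas (measurableSet_singleton b))).inter
      (((hAmeas (measurableSet_singleton a))).inter MeasurableSet.univ))]
    refine Finset.sum_congr rfl fun c _ => ?_
    have hset : A ⁻¹' {a} ∩ (B ⁻¹' {b} ∩ C ⁻¹' {c})
        = C ⁻¹' {c} ∩ (B ⁻¹' {b} ∩ (A ⁻¹' {a} ∩ Set.univ)) := by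
      ext ω
      simp only [Set.mem_inter_iff, Set.mem_preimage, Set.mem_singleton_iff, Set.mem_univ,
        and_true]
      tauto
    simp only [hp_def]
    rw [hset]
  -- the conditional independence factorization
  have eC : entr μ C = ∑ c, Real.negMulLog (∑ a, ∑ b, p a b c) := by
    rw [entr_eq hCmeas]
    exact Finset.sum_congr rfl fun c _ => by rw [hpc]
  have eAC : entr μ (fun ω => (A ω, C ω)) = ∑ a, ∑ c, Real.negMulLog (∑ b, p a b c) := by
    rw [entr_eq (hAmeas.prodMk hCmeas), Fintype.sum_prod_type]
    refine Finset.sum_congr rfl fun a _ => Finset.sum_congr rfl fun c _ => ?_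
    rw [pair_preimage, hpac]
  have eBC : entr μ (fun ω => (B ω, C ω)) = ∑ b, ∑ c, Real.negMulLog (∑ a, p a b c) := by
    rw [entr_eq (hBmeas.prodMk hCmeas), Fintype.sum_prod_type]
    refine Finset.sum_congr rfl fun b _ => Finset.sum_congr rfl fun c _ => ?_
    rw [pair_preimage, hpbc]
  have eABC : entr μ (fun ω => ((A ω, B ω), C ω))
      = ∑ a, ∑ b, ∑ c, Real.negMulLog (p a b c) := by
    rw [entr_eq ((hAmeas.prodMk hBmeas).prodMk hCmeas), Fintype.sum_prod_type]
    rw [Fintype.sum_prod_type]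
    refine Finset.sum_congr rfl fun a _ => Finset.sum_congr rfl fun b _ =>
      Finset.sum_congr rfl fun c _ => ?_
    rw [pair_preimage (fun ω => (A ω, B ω)) C (a, b) c, pair_preimage A B a b,
      Set.inter_assoc]
  have hMI : (∑ a, ∑ c, Real.negMulLog (∑ b, p a b c))
         + (∑ b, ∑ c, Real.negMulLog (∑ a, p a b c))
         - (∑ a, ∑ b, ∑ c, Real.negMulLog (p a b c))
         - (∑ c, Real.negMulLog (∑ a, ∑ b, p a b c)) = 0 := by
    have h := hSec
    simp only [condMI, condEntr] at h
    rw [eAC, eBC, eABC, eC] at h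
    linarith
  have hF := core_fac p hp0 hptot hMI
  clear hMI eC eAC eBC eABC
  -- structural facts about C and S
  have hCfst : ∀ c : V × σ, C ⁻¹' {c} = S ⁻¹' {c.1} := by
    intro c
    ext ω
    simp only [Set.mem_preimage, Set.mem_singleton_iff, hC_def]
    constructor
    · intro h; exact congrArg Prod.fst h
    · intro h; exact Prod.ext h (Subsingleton.elim _ _)
  set g : (Fin K → V) → V × σ := fun a => (∑ k, a k, default) with hg_def
  have hACg : ∀ (a : Fin K → V) (c : V × σ),
      A ⁻¹' {a} ∩ C ⁻¹' {c} = if c = g a then A ⁻¹' {a} else ∅ := by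
    intro a c
    have hsub : ∀ ω, A ω = a → C ω = g a := by
      intro ω hω
      show (∑ k, W k ω, J ω) = (∑ k, a k, default)
      refine Prod.ext ?_ (Subsingleton.elim _ _)
      show (∑ k, W k ω) = ∑ k, a k
      exact Finset.sum_congr rfl fun k _ => congrFun hω k
    by_cases h : c = g a
    · subst h
      rw [if_pos rfl]
      ext ω
      simp only [Set.mem_inter_iff, Set.mem_preimage, Set.mem_singleton_iff]
      exact ⟨fun hh => hh.1, fun hh => ⟨hh, hsub ω hh⟩⟩
    · rw [if_neg h]
      ext ω
      simp only [Set.mem_inter_iff, Set.mem_preimage, Set.mem_singleton_iff,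
        Set.mem_empty_iff_false, iff_false, not_and]
      intro h1 h2
      exact h (h2 ▸ hsub ω h1)
  -- uniformity
  set τ : ℝ := ((Fintype.card V : ℝ))⁻¹ with hτ_def
  have hcardpos : (0 : ℝ) < (Fintype.card V : ℝ) := by
    exact_mod_cast Fintype.card_pos
  have hτpos : 0 < τ := by rw [hτ_def]; positivity
  have hτne : τ ≠ 0 := hτpos.ne'
  have hτcard : τ * (Fintype.card V : ℝ) = 1 := inv_mul_cancel₀ hcardpos.ne'
  have hWu_pr : ∀ k (v : V), (μ (W k ⁻¹' {v})).toReal = τ := by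
    intro k v
    rw [hWunif k v, hτ_def]
    simp [ENNReal.toReal_inv]
  have hA_pr : ∀ a : Fin K → V, (μ (A ⁻¹' {a})).toReal = τ ^ K := by
    intro a
    have hpre : A ⁻¹' {a} = ⋂ k, W k ⁻¹' {a k} := by
      ext ω
      simp [hA_def, funext_iff]
    rw [hpre, hWindep.meas_iInter (fun k => ⟨{a k}, measurableSet_singleton _, rfl⟩)]
    rw [ENNReal.toReal_prod]
    calc ∏ k : Fin K, (μ (W k ⁻¹' {a k})).toReal = ∏ _k : Fin K, τ :=
          Finset.prod_congr rfl fun k _ => hWu_pr k (a k)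
      _ = τ ^ K := by rw [Finset.prod_const]; simp
  -- S is uniform
  have hAS : ∀ (a : Fin K → V) (s : V),
      A ⁻¹' {a} ∩ S ⁻¹' {s} = if s = ∑ k, a k then A ⁻¹' {a} else ∅ := by
    intro a s
    have := hACg a (s, default)
    rw [hCfst (s, default)] at this
    rw [this]
    have hcond : ((s, (default : σ)) = g a) ↔ (s = ∑ k, a k) := by
      rw [hg_def]
      constructor
      · intro h; exact congrArg Prod.fst h
      · intro h; exact Prod.ext h rfl
    by_cases h : s = ∑ k, a k
    · rw [if_pos (hcond.2 h), if_pos h]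
    · rw [if_neg (fun hh => h (hcond.1 hh)), if_neg h]
  have hS_fun : ∀ s : V, (μ (S ⁻¹' {s})).toReal
      = ∑ a : Fin K → V, (if s = ∑ k, a k then τ ^ K else 0) := by
    intro s
    rw [pr_fiber hAmeas (hSmeas (measurableSet_singleton s))]
    refine Finset.sum_congr rfl fun a _ => ?_
    rw [hAS a s]
    by_cases h : s = ∑ k, a k
    · rw [if_pos h, if_pos h, hA_pr]
    · rw [if_neg h, if_neg h]; simp
  have hS_const : ∀ s s' : V, (μ (S ⁻¹' {s})).toReal = (μ (S ⁻¹' {s'})).toReal := by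
    intro s s'
    rw [hS_fun s, hS_fun s']
    set e : (Fin K → V) ≃ (Fin K → V) :=
      { toFun := fun a => Function.update a u (a u + (s' - s))
        invFun := fun a => Function.update a u (a u - (s' - s))
        left_inv := fun a => by
          funext k
          by_cases hk : k = u
          · subst hk; simp
          · simp [Function.update_apply, hk]
        right_inv := fun a => by
          funext k
          by_cases hk : k = u
          · subst hk; simp
          · simp [Function.update_apply, hk] } with he_def
    refine Fintype.sum_equiv e _ _ fun a => ?_
    have hsum_e : ∑ k, e a k = (∑ k, a k) + (s' - s) := by
      show ∑ k, Function.update a u (a u + (s' - s)) k = _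
      rw [sum_update]
      abel
    rw [hsum_e]
    by_cases h : s = ∑ k, a k
    · rw [if_pos h, if_pos (by rw [← h]; abel)]
    · rw [if_neg h, if_neg ?_]
      intro hh
      apply h
      have h3 := congrArg (fun t => t - (s' - s)) hh
      calc s = s' - (s' - s) := by abel
        _ = ∑ k, a k + (s' - s) - (s' - s) := h3
        _ = ∑ k, a k := by abel
  have hS_pr : ∀ s : V, (μ (S ⁻¹' {s})).toReal = τ := by
    have h1 : ∑ s : V, (μ (S ⁻¹' {s})).toReal = 1 := by
      have h0 : (μ (Set.univ : Set Ω)).toReal = 1 := by simp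
      rw [pr_fiber hSmeas MeasurableSet.univ] at h0
      rw [← h0]
      exact Finset.sum_congr rfl fun s _ => by rw [Set.inter_univ]
    intro s
    have h2 : ∑ s' : V, (μ (S ⁻¹' {s'})).toReal
        = (Fintype.card V : ℝ) * (μ (S ⁻¹' {s})).toReal := by
      calc ∑ s' : V, (μ (S ⁻¹' {s'})).toReal
          = ∑ _s' : V, (μ (S ⁻¹' {s})).toReal :=
            Finset.sum_congr rfl fun s' _ => hS_const s' s
        _ = (Fintype.card V : ℝ) * (μ (S ⁻¹' {s})).toReal := by
            rw [Finset.sum_const]; simp [nsmul_eq_mul]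
    rw [h1] at h2
    rw [hτ_def]
    field_simp
    linarith
  -- key product identity from the factorization
  have hKK : τ ^ K = τ ^ (K - 1) * τ := by
    rw [← pow_succ]
    congr 1
    omega
  have hkey : ∀ (a : Fin K → V) (b : Fin K → VX),
      (μ (A ⁻¹' {a} ∩ B ⁻¹' {b})).toReal
        = τ ^ (K - 1) * (μ (B ⁻¹' {b} ∩ S ⁻¹' {∑ k, a k})).toReal := by
    intro a b
    have hF' := hF a b (g a)
    rw [hpc, hpac, hpbc] at hF'
    have hset1 : A ⁻¹' {a} ∩ (B ⁻¹' {b} ∩ C ⁻¹' {g a}) = A ⁻¹' {a} ∩ B ⁻¹' {b} := by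
      rw [Set.inter_left_comm, hACg a (g a), if_pos rfl, Set.inter_comm]
    have e1 : p a b (g a) = (μ (A ⁻¹' {a} ∩ B ⁻¹' {b})).toReal := by
      simp only [hp_def]
      rw [hset1]
    have e2 : (μ (A ⁻¹' {a} ∩ C ⁻¹' {g a})).toReal = τ ^ K := by
      rw [hACg a (g a), if_pos rfl, hA_pr]
    have e3 : C ⁻¹' {g a} = S ⁻¹' {∑ k, a k} := hCfst (g a)
    rw [e1, e2, e3, hS_pr (∑ k, a k)] at hF'
    apply mul_right_cancel₀ hτne
    rw [hF', hKK]
    ring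
  -- joint pmf of (X u, W u)
  set r : VX → V → ℝ := fun x w => (μ (X u ⁻¹' {x} ∩ W u ⁻¹' {w})).toReal with hr_def
  have hG : ∀ (x : VX) (s : V), (μ (X u ⁻¹' {x} ∩ S ⁻¹' {s})).toReal
      = ∑ b, (if b u = x then (μ (B ⁻¹' {b} ∩ S ⁻¹' {s})).toReal else 0) := by
    intro x s
    rw [pr_fiber hBmeas (((hXmeas u) (measurableSet_singleton x)).inter
      (hSmeas (measurableSet_singleton s)))]
    refine Finset.sum_congr rfl fun b _ => ?_
    by_cases h : b u = x
    · rw [if_pos h]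
      have hset : B ⁻¹' {b} ∩ (X u ⁻¹' {x} ∩ S ⁻¹' {s}) = B ⁻¹' {b} ∩ S ⁻¹' {s} := by
        ext ω
        simp only [Set.mem_inter_iff, Set.mem_preimage, Set.mem_singleton_iff]
        constructor
        · rintro ⟨h1, _, h3⟩; exact ⟨h1, h3⟩
        · rintro ⟨h1, h3⟩
          refine ⟨h1, ?_, h3⟩
          have hxb : X u ω = b u := (congrFun h1 u : B ω u = b u)
          rw [hxb, h]
      rw [hset]
    · rw [if_neg h]
      have hset : B ⁻¹' {b} ∩ (X u ⁻¹' {x} ∩ S ⁻¹' {s}) = ∅ := by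
        ext ω
        simp only [Set.mem_inter_iff, Set.mem_preimage, Set.mem_singleton_iff,
          Set.mem_empty_iff_false, iff_false, not_and]
        intro h1 h2
        exact absurd (((congrFun h1 u : B ω u = b u).symm).trans h2) h
      rw [hset]
      simp
  have hrw1 : ∀ (x : VX) (w : V), r x w
      = ∑ a : Fin K → V, (if a u = w
          then τ ^ (K - 1) * (μ (X u ⁻¹' {x} ∩ S ⁻¹' {∑ k, a k})).toReal else 0) := by
    intro x w
    have hrxw : r x w = (μ (X u ⁻¹' {x} ∩ W u ⁻¹' {w})).toReal := rfl
    rw [hrxw, pr_fiber hAmeas (((hXmeas u) (measurableSet_singleton x)).inter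
      ((hWmeas u) (measurableSet_singleton w)))]
    refine Finset.sum_congr rfl fun a _ => ?_
    by_cases ha : a u = w
    · rw [if_pos ha]
      rw [pr_fiber hBmeas ((hAmeas (measurableSet_singleton a)).inter
        (((hXmeas u) (measurableSet_singleton x)).inter
          ((hWmeas u) (measurableSet_singleton w))))]
      rw [hG x (∑ k, a k), Finset.mul_sum]
      refine Finset.sum_congr rfl fun b _ => ?_
      by_cases hb : b u = x
      · rw [if_pos hb]
        have hset : B ⁻¹' {b} ∩ (A ⁻¹' {a} ∩ (X u ⁻¹' {x} ∩ W u ⁻¹' {w}))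
            = A ⁻¹' {a} ∩ B ⁻¹' {b} := by
          ext ω
          simp only [Set.mem_inter_iff, Set.mem_preimage, Set.mem_singleton_iff]
          constructor
          · rintro ⟨h1, h2, _⟩; exact ⟨h2, h1⟩
          · rintro ⟨h2, h1⟩
            refine ⟨h1, h2, ?_, ?_⟩
            · exact (congrFun h1 u : B ω u = b u).trans hb
            · exact (congrFun h2 u : A ω u = a u).trans ha
        rw [hset, hkey a b]
      · rw [if_neg hb, mul_zero]
        have hset : B ⁻¹' {b} ∩ (A ⁻¹' {a} ∩ (X u ⁻¹' {x} ∩ W u ⁻¹' {w}))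
            = ∅ := by
          ext ω
          simp only [Set.mem_inter_iff, Set.mem_preimage, Set.mem_singleton_iff,
            Set.mem_empty_iff_false, iff_false, not_and]
          intro h1 _ h3
          exact absurd (((congrFun h1 u : B ω u = b u).symm).trans h3) hb
        rw [hset]
        simp
    · rw [if_neg ha]
      have hset : A ⁻¹' {a} ∩ (X u ⁻¹' {x} ∩ W u ⁻¹' {w}) = ∅ := by
        ext ω
        simp only [Set.mem_inter_iff, Set.mem_preimage, Set.mem_singleton_iff,
          Set.mem_empty_iff_false, iff_false, not_and]
        intro h1 _ h2
        exact absurd (((congrFun h1 u : A ω u = a u).symm).trans h2) ha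
      rw [hset]
      simp
  -- the fiber sum is independent of w
  have hPhi : ∀ (x : VX) (w w' : V),
      (∑ a : Fin K → V, if a u = w then (μ (X u ⁻¹' {x} ∩ S ⁻¹' {∑ k, a k})).toReal else 0)
        = (∑ a : Fin K → V, if a u = w' then (μ (X u ⁻¹' {x} ∩ S ⁻¹' {∑ k, a k})).toReal else 0) := by
    intro x w w'
    obtain ⟨j0, hj0⟩ : ∃ j0 : Fin K, j0 ≠ u := by
      have hcard : 1 < Fintype.card (Fin K) := by
        rw [Fintype.card_fin]; omega
      exact Fintype.exists_ne_of_one_lt_card hcard u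
    rw [← Finset.sum_filter, ← Finset.sum_filter]
    refine Finset.sum_nbij'
      (i := fun a => Function.update (Function.update a j0 (a j0 + (w - w'))) u w')
      (j := fun a => Function.update (Function.update a j0 (a j0 + (w' - w))) u w)
      ?_ ?_ ?_ ?_ ?_
    · intro a _
      simp [Function.update_self]
    · intro a _
      simp [Function.update_self]
    · intro a ha
      have hau : a u = w := (Finset.mem_filter.1 ha).2
      funext k
      by_cases hku : k = u
      · subst hku
        simp [Function.update_apply, hj0, hau]
      · by_cases hkj : k = j0
        · subst hkj
          simp [Function.update_apply, hj0, hku]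
          abel
        · simp [Function.update_apply, hku, hkj]
    · intro a ha
      have hau : a u = w' := (Finset.mem_filter.1 ha).2
      funext k
      by_cases hku : k = u
      · subst hku
        simp [Function.update_apply, hj0, hau]
      · by_cases hkj : k = j0
        · subst hkj
          simp [Function.update_apply, hj0, hku]
          abel
        · simp [Function.update_apply, hku, hkj]
    · intro a ha
      have hau : a u = w := (Finset.mem_filter.1 ha).2
      have hsum_eq : (∑ k, Function.update (Function.update a j0 (a j0 + (w - w'))) u w' k)
          = ∑ k, a k := by
        rw [sum_update, sum_update]
        rw [Function.update_apply]
        rw [if_neg (by exact fun hh => hj0 (hh ▸ rfl) : ¬u = j0)]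
        rw [hau]
        abel
      rw [hsum_eq]
  -- factorization of the joint pmf of (X u, W u)
  have hXmarg : ∀ x : VX, (∑ w', r x w') = (μ (X u ⁻¹' {x})).toReal := by
    intro x
    rw [pr_fiber (hWmeas u) ((hXmeas u) (measurableSet_singleton x))]
    refine Finset.sum_congr rfl fun w' _ => ?_
    show (μ (X u ⁻¹' {x} ∩ W u ⁻¹' {w'})).toReal = _
    rw [Set.inter_comm]
  have hWmarg : ∀ w : V, (∑ x', r x' w) = (μ (W u ⁻¹' {w})).toReal := by
    intro w
    rw [pr_fiber (hXmeas u) ((hWmeas u) (measurableSet_singleton w))]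
  have hrfac : ∀ (x : VX) (w : V),
      r x w = (μ (X u ⁻¹' {x})).toReal * (μ (W u ⁻¹' {w})).toReal := by
    intro x w
    have hfactor : ∀ w0 : V, r x w0
        = τ ^ (K - 1) * (∑ a : Fin K → V, if a u = w0
            then (μ (X u ⁻¹' {x} ∩ S ⁻¹' {∑ k, a k})).toReal else 0) := by
      intro w0
      rw [hrw1 x w0, Finset.mul_sum]
      refine Finset.sum_congr rfl fun a _ => ?_
      split_ifs <;> simp
    have h1 : (μ (X u ⁻¹' {x})).toReal
        = (Fintype.card V : ℝ) * r x w := by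
      rw [← hXmarg x]
      calc ∑ w', r x w' = ∑ _w' : V, r x w := by
            refine Finset.sum_congr rfl fun w' _ => ?_
            rw [hfactor w', hfactor w, hPhi x w' w]
        _ = (Fintype.card V : ℝ) * r x w := by
            rw [Finset.sum_const]
            simp [nsmul_eq_mul]
    rw [h1, hWu_pr u w]
    calc r x w = (τ * (Fintype.card V : ℝ)) * r x w := by rw [hτcard, one_mul]
      _ = (Fintype.card V : ℝ) * r x w * τ := by ring
  -- conclude
  have hrsum : ∑ x, ∑ w, r x w = 1 := by
    have h0 : (μ (Set.univ : Set Ω)).toReal = 1 := by simp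
    rw [pr_fiber (hXmeas u) MeasurableSet.univ] at h0
    rw [← h0]
    refine Finset.sum_congr rfl fun x _ => ?_
    rw [Set.inter_univ]
    rw [pr_fiber (hWmeas u) ((hXmeas u) (measurableSet_singleton x))]
    refine Finset.sum_congr rfl fun w _ => ?_
    show (μ (X u ⁻¹' {x} ∩ W u ⁻¹' {w})).toReal = _
    rw [Set.inter_comm]
  have hfac' : ∀ x w, r x w = (∑ w', r x w') * (∑ x', r x' w) := by
    intro x w
    rw [hXmarg x, hWmarg w]
    exact hrfac x w
  have hcore := core_indep r hrsum hfac'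
  simp only [mutInfo]
  rw [entr_eq (hXmeas u), entr_eq (hWmeas u),
    entr_eq ((hXmeas u).prodMk (hWmeas u)), Fintype.sum_prod_type]
  have e1 : ∑ x, Real.negMulLog ((μ (X u ⁻¹' {x})).toReal)
      = ∑ x, Real.negMulLog (∑ w, r x w) :=
    Finset.sum_congr rfl fun x _ => by rw [hXmarg x]
  have e2 : ∑ w, Real.negMulLog ((μ (W u ⁻¹' {w})).toReal)
      = ∑ w, Real.negMulLog (∑ x, r x w) :=
    Finset.sum_congr rfl fun w _ => by rw [hWmarg w]
  have e3 : ∑ x, ∑ w, Real.negMulLog ((μ ((fun ω => (X u ω, W u ω)) ⁻¹' {(x, w)})).toReal)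
      = ∑ x, ∑ w, Real.negMulLog (r x w) := by
    refine Finset.sum_congr rfl fun x _ => Finset.sum_congr rfl fun w _ => ?_
    rw [pair_preimage]
  rw [e1, e2, e3]
  linarith [hcore]


end auxlemmas

/-- in the secure summation model, assuming security against the empty
colluding set, every user's message is independent of that user's own input:
`I(X_u ; W_u) = 0`. -/
theorem stmt4
    (q K L LX : ℕ) [NeZero q] (hq : IsPrimePow q) (hK : 2 ≤ K) (hL : 1 ≤ L) (hLX : 1 ≤ LX)
    {Ω : Type*} [MeasurableSpace Ω] (μ : Measure Ω) [IsProbabilityMeasure μ]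
    (κ : Fin K → Type*) [∀ k, Fintype (κ k)] [∀ k, MeasurableSpace (κ k)]
    (W : Fin K → Ω → (Fin L → ZMod q))
    (Z : ∀ k, Ω → κ k)
    (X : Fin K → Ω → (Fin LX → ZMod q))
    (hWmeas : ∀ k, Measurable (W k)) (hZmeas : ∀ k, Measurable (Z k))
    (hWunif : ∀ k, IsUnif μ (W k))
    (hWindep : iIndepFun W μ)
    (hWZindep : IndepFun (fun ω => fun k => W k ω) (fun ω => fun k => Z k ω) μ)
    (f : ∀ k, (Fin L → ZMod q) → κ k → (Fin LX → ZMod q))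
    (hX : ∀ k, X k = fun ω => f k (W k ω) (Z k ω))
    (hXmeas : ∀ k, Measurable (X k))
    (hSecEmpty : condMI μ (fun ω => fun k => W k ω) (fun ω => fun k => X k ω)
      (fun ω => (∑ k, W k ω,
        fun k : {k : Fin K // k ∈ (∅ : Finset (Fin K))} => (W k.1 ω, Z k.1 ω))) = 0)
    (u : Fin K) :
    mutInfo μ (X u) (W u) = 0 := by
  haveI : IsEmpty {k : Fin K // k ∈ (∅ : Finset (Fin K))} :=
    ⟨fun k => absurd k.2 (Finset.notMem_empty _)⟩
  exact aux μ hK W X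
    (fun ω => fun k : {k : Fin K // k ∈ (∅ : Finset (Fin K))} => (W k.1 ω, Z k.1 ω))
    hWmeas hXmeas (fun k v => hWunif k v) hWindep hSecEmpty u
end

section
/- Let q be a prime power, K ≥ 2, L ≥ 1. Let W_1,…,W_K, N_1,…,N_{K−1} be mutually independent random variables, each uniformly distributed on (ZMod q)^L. Define N_K = −(N_1 + ⋯ + N_{K−1}) and X_k = W_k + N_k for k ∈ {1,…,K}. Then (i) X_1 + ⋯ + X_K = W_1 + ⋯ + W_K almost surely, and (ii) for every subset T ⊆ {1,…,K}, I((W_k)_{k∈[K]}; (X_k)_{k∈[K]} | W_1+⋯+W_K, (W_k, N_k)_{k∈T}) = 0. In particular the rate tuple (R, R_Z, R_{Z_Σ}) = (1, 1, K−1) is achievable for secure summation with up to T colluding users for any 0 ≤ T ≤ K−2. -/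
open MeasureTheory ProbabilityTheory

set_option linter.unusedSectionVars false
set_option maxHeartbeats 1000000

section helpers
-- helper A
lemma helperA {M : Type*} [AddCommGroup M] {K : ℕ} (hK : 1 ≤ K) (w : Fin K → M) :
    ∑ j : Fin (K-1), w (⟨j.1, by omega⟩ : Fin K) = (∑ k, w k) - w ⟨K-1, by omega⟩ := by
  obtain ⟨K', rfl⟩ : ∃ K', K = K' + 1 := ⟨K-1, by omega⟩
  have : ∑ j : Fin K', w (⟨j.1, by omega⟩ : Fin (K'+1)) = (∑ k, w k) - w ⟨K', by omega⟩ := by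
    rw [Fin.sum_univ_castSucc (f := w)]
    have h1 : ∀ j : Fin K', w (Fin.castSucc j) = w ⟨j.1, by omega⟩ := by
      intro j; congr 1
    rw [Finset.sum_congr rfl (fun j _ => h1 j)]
    have h2 : (Fin.last K') = (⟨K', by omega⟩ : Fin (K'+1)) := rfl
    rw [h2, add_sub_cancel_right]
  exact this

-- helper B
lemma helperB {M : Type*} [AddCommGroup M] {K : ℕ} (hK : 1 ≤ K) (f : Fin (K-1) → M) :
    ∑ k : Fin K, (if h : (k:ℕ) < K - 1 then f ⟨k, h⟩ else -∑ j, f j) = 0 := by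
  obtain ⟨K', rfl⟩ : ∃ K', K = K' + 1 := ⟨K-1, by omega⟩
  have : ∑ k : Fin (K'+1), (if h : (k:ℕ) < K' then f ⟨k, h⟩ else -∑ j, f j) = 0 := by
    rw [Fin.sum_univ_castSucc]
    have h1 : ∀ j : Fin K', (if h : ((Fin.castSucc j :):ℕ) < K' then f ⟨(Fin.castSucc j : Fin (K'+1)), h⟩ else -∑ j, f j) = f j := by
      intro j
      rw [dif_pos (by simpa using j.2)]
      congr 1
    rw [Finset.sum_congr rfl (fun j _ => h1 j)]
    rw [dif_neg (by simp)]
    exact add_neg_cancel _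
  exact this

section entropy
variable {Ω : Type*} [MeasurableSpace Ω] {μ : Measure Ω} [IsProbabilityMeasure μ]
variable {G : Type*} [AddCommGroup G] [Fintype G] [MeasurableSpace G] [MeasurableSingletonClass G]
variable {H : Type*} [AddCommGroup H] [Fintype H] [MeasurableSpace H] [MeasurableSingletonClass H]

lemma meas_preimage_finset [DecidableEq G] (U : Ω → G) (hU : Measurable U)
    (hunif : ∀ g : G, μ (U ⁻¹' {g}) = (Fintype.card G : ENNReal)⁻¹)
    (s : Finset G) :
    μ (U ⁻¹' ↑s) = (s.card : ENNReal) * (Fintype.card G : ENNReal)⁻¹ := by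
  classical
  have h1 : (↑s : Set G) = ⋃ g ∈ s, {g} := by ext x; simp
  rw [h1, Set.preimage_iUnion₂, measure_biUnion_finset]
  · rw [Finset.sum_congr rfl (fun g _ => hunif g), Finset.sum_const, nsmul_eq_mul]
  · intro i hi j hj hij
    exact Disjoint.preimage _ (by simp [hij])
  · exact fun g _ => hU (measurableSet_singleton g)

lemma entr_comp_hom (U : Ω → G) (hU : Measurable U)
    (hunif : ∀ g : G, μ (U ⁻¹' {g}) = (Fintype.card G : ENNReal)⁻¹)
    (ψ : G →+ H) :
    entr μ (fun ω => ψ (U ω)) =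
      Real.log (Fintype.card G) - Real.log (Nat.card ψ.ker) := by
  classical
  set k : ℕ := Nat.card ψ.ker with hk
  set r : ℕ := Nat.card ψ.range with hr
  have hcard : Fintype.card G = r * k := by
    rw [← Nat.card_eq_fintype_card, AddSubgroup.card_eq_card_quotient_mul_card_addSubgroup ψ.ker,
      Nat.card_congr (QuotientAddGroup.quotientKerEquivRange ψ).toEquiv]
  have hkpos : 0 < k := Nat.card_pos
  have hrpos : 0 < r := Nat.card_pos
  -- measure of each point
  have hfiber : ∀ h : H, (μ.map (fun ω => ψ (U ω))) {h}
      = ((Finset.univ.filter (fun g => ψ g = h)).card : ENNReal) * (Fintype.card G : ENNReal)⁻¹ := by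
    intro h
    have hmeas : Measurable fun ω => ψ (U ω) := by
      exact Measurable.of_discrete.comp hU
    rw [Measure.map_apply hmeas (measurableSet_singleton h)]
    have : (fun ω => ψ (U ω)) ⁻¹' {h} = U ⁻¹' ↑(Finset.univ.filter (fun g => ψ g = h)) := by
      ext ω; simp
    rw [this, meas_preimage_finset U hU hunif]
  -- fiber cardinalities
  have hfc : ∀ h : H, (Finset.univ.filter (fun g => ψ g = h)).card
      = if h ∈ ψ.range then k else 0 := by
    intro h
    by_cases hh : h ∈ ψ.range
    · rw [if_pos hh]
      obtain ⟨g0, hg0⟩ := hh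
      have : Nat.card {g : G // ψ g = h} = k := by
        refine Nat.card_congr ?_
        refine Equiv.ofBijective (fun x => ⟨x.1 - g0, ?_⟩) ⟨?_, ?_⟩
        · simp [AddMonoidHom.mem_ker, map_sub, x.2, hg0]
        · intro a b hab
          have := congrArg Subtype.val hab
          simpa [sub_left_injective.eq_iff] using Subtype.ext (by
            have : a.1 - g0 = b.1 - g0 := congrArg Subtype.val hab
            exact sub_left_injective this)
        · intro y
          refine ⟨⟨y.1 + g0, by simp [map_add, hg0, show ψ y.1 = 0 from y.2]⟩, ?_⟩
          simp
      rw [← this]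
      rw [Nat.card_eq_fintype_card]
      simp [Fintype.card_subtype]
    · rw [if_neg hh]
      rw [Finset.card_eq_zero]
      ext g
      simp only [Finset.mem_filter, Finset.mem_univ, true_and, Finset.notMem_empty, iff_false]
      intro hg
      exact hh ⟨g, hg⟩
  -- evaluate the entropy sum
  have hG0 : (Fintype.card G : ℝ) ≠ 0 := by positivity
  have hr0 : (r : ℝ) ≠ 0 := Nat.cast_ne_zero.mpr hrpos.ne'
  have hk0 : (k : ℝ) ≠ 0 := Nat.cast_ne_zero.mpr hkpos.ne'
  have hval : ∀ h : H, Real.negMulLog ((μ.map (fun ω => ψ (U ω))) {h}).toReal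
      = if h ∈ ψ.range then Real.negMulLog (r : ℝ)⁻¹ else 0 := by
    intro h
    rw [hfiber h, hfc h]
    by_cases hh : h ∈ ψ.range
    · rw [if_pos hh, if_pos hh]
      congr 1
      rw [ENNReal.toReal_mul, ENNReal.toReal_inv]
      simp only [ENNReal.toReal_natCast]
      rw [hcard]
      push_cast
      rw [mul_comm (r:ℝ) (k:ℝ), mul_inv]
      field_simp
    · rw [if_neg hh, if_neg hh]
      simp [Real.negMulLog_zero]
  unfold entr
  rw [Finset.sum_congr rfl (fun h _ => hval h), Finset.sum_ite, Finset.sum_const,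
    Finset.sum_const_zero, add_zero, nsmul_eq_mul]
  have hcf : (Finset.univ.filter (fun h => h ∈ ψ.range)).card = r := by
    rw [hr, Nat.card_eq_fintype_card,
      Subsingleton.elim ψ.fintypeRange (Subtype.fintype (fun h => h ∈ ψ.range))]
    convert (Fintype.card_subtype (fun h => h ∈ ψ.range)).symm
  rw [hcf]
  rw [Real.negMulLog, Real.log_inv]
  have heq : (r : ℝ) * (-(↑r)⁻¹ * -Real.log r) = Real.log r := by
    field_simp
  rw [heq]
  have hlog : Real.log (Fintype.card G) = Real.log r + Real.log k := by
    rw [hcard]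
    push_cast
    exact Real.log_mul hr0 hk0
  rw [hlog]
  ring

end entropy

section homs
variable (q K L : ℕ) [NeZero q]

def embFin (j : Fin (K-1)) : Fin K := ⟨j.1, lt_of_lt_of_le j.2 (Nat.sub_le K 1)⟩

def ntotF : ((Fin K ⊕ Fin (K-1)) → (Fin L → ZMod q)) →+ (Fin K → Fin L → ZMod q) :=
  AddMonoidHom.mk'
    (fun g k => if h : (k:ℕ) < K - 1 then g (Sum.inr ⟨k, h⟩) else -∑ j, g (Sum.inr j))
    (by
      intro a b; funext k
      by_cases h : (k:ℕ) < K-1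
      · simp [h]
      · simp only [dif_neg h, Pi.add_apply, Finset.sum_add_distrib]
        abel)

lemma ntotF_pos (g : (Fin K ⊕ Fin (K-1)) → (Fin L → ZMod q)) (k : Fin K) (h : (k:ℕ) < K - 1) :
    ntotF q K L g k = g (Sum.inr ⟨k, h⟩) := by
  show (if h : (k:ℕ) < K - 1 then g (Sum.inr ⟨k, h⟩) else -∑ j, g (Sum.inr j)) = _
  rw [dif_pos h]

lemma ntotF_neg (g : (Fin K ⊕ Fin (K-1)) → (Fin L → ZMod q)) (k : Fin K) (h : ¬ (k:ℕ) < K - 1) :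
    ntotF q K L g k = -∑ j, g (Sum.inr j) := by
  show (if h : (k:ℕ) < K - 1 then g (Sum.inr ⟨k, h⟩) else -∑ j, g (Sum.inr j)) = _
  rw [dif_neg h]

lemma ntotF_emb (g : (Fin K ⊕ Fin (K-1)) → (Fin L → ZMod q)) (j : Fin (K-1)) :
    ntotF q K L g (embFin K j) = g (Sum.inr j) := by
  rw [ntotF_pos q K L g _ (by exact j.2)]
  congr 1

def phiW : ((Fin K ⊕ Fin (K-1)) → (Fin L → ZMod q)) →+ (Fin K → Fin L → ZMod q) :=
  AddMonoidHom.mk' (fun g k => g (Sum.inl k)) (by intro a b; rfl)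

def phiY : ((Fin K ⊕ Fin (K-1)) → (Fin L → ZMod q)) →+ (Fin K → Fin L → ZMod q) :=
  AddMonoidHom.mk' (fun g k => g (Sum.inl k) + ntotF q K L g k)
    (by
      intro a b; funext k
      simp only [map_add, Pi.add_apply]
      abel)

def phiZ (T : Finset (Fin K)) : ((Fin K ⊕ Fin (K-1)) → (Fin L → ZMod q)) →+
    ((Fin L → ZMod q) × ({k : Fin K // k ∈ T} → (Fin L → ZMod q) × (Fin L → ZMod q))) :=
  AddMonoidHom.mk'
    (fun g => (∑ k, g (Sum.inl k), fun k => (g (Sum.inl k.1), ntotF q K L g k.1)))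
    (by
      intro a b
      refine Prod.ext ?_ ?_
      · simp [Finset.sum_add_distrib]
      · funext k
        simp [map_add])

lemma phiW_apply (g) (k : Fin K) : phiW q K L g k = g (Sum.inl k) := rfl
lemma phiY_apply (g) (k : Fin K) : phiY q K L g k = g (Sum.inl k) + ntotF q K L g k := rfl
lemma phiZ_apply (T : Finset (Fin K)) (g) : phiZ q K L T g =
    (∑ k, g (Sum.inl k), fun k : {k : Fin K // k ∈ T} => (g (Sum.inl k.1), ntotF q K L g k.1)) := rfl

def bmap (g : (Fin K ⊕ Fin (K-1)) → (Fin L → ZMod q)) :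
    (Fin K ⊕ Fin (K-1)) → (Fin L → ZMod q) :=
  Sum.elim (fun k => g (Sum.inl k)) (fun j => -g (Sum.inl (embFin K j)))

lemma ntotF_bmap (hK : 1 ≤ K) (g : (Fin K ⊕ Fin (K-1)) → (Fin L → ZMod q))
    (hsum : ∑ k, g (Sum.inl k) = 0) :
    ntotF q K L (bmap q K L g) = fun k => -g (Sum.inl k) := by
  funext k
  by_cases h : (k:ℕ) < K-1
  · rw [ntotF_pos q K L _ k h]
    show -g (Sum.inl (embFin K ⟨k, h⟩)) = -g (Sum.inl k)
    congr 1
  · rw [ntotF_neg q K L _ k h]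
    have h1 : ∀ j : Fin (K-1), bmap q K L g (Sum.inr j) = -g (Sum.inl (embFin K j)) := fun _ => rfl
    rw [Finset.sum_congr rfl (fun j _ => h1 j), Finset.sum_neg_distrib, neg_neg]
    have h2 := helperA hK (fun k => g (Sum.inl k))
    have h3 : (∑ j : Fin (K-1), g (Sum.inl (embFin K j)))
        = (∑ k, g (Sum.inl k)) - g (Sum.inl ⟨K-1, by omega⟩) := h2
    rw [h3, hsum, zero_sub]
    have hk2 := k.2
    have hk : (⟨K-1, by omega⟩ : Fin K) = k := Fin.ext (by simp; omega)
    exact congrArg (fun x => -g (Sum.inl x)) hk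

end homs


section ker
variable (q K L : ℕ) [NeZero q] (T : Finset (Fin K))

lemma mem_kerZ (g : (Fin K ⊕ Fin (K-1)) → (Fin L → ZMod q)) :
    g ∈ (phiZ q K L T).ker ↔
      (∑ k, g (Sum.inl k) = 0 ∧
        ∀ k : Fin K, k ∈ T → (g (Sum.inl k) = 0 ∧ ntotF q K L g k = 0)) := by
  rw [AddMonoidHom.mem_ker, phiZ_apply, Prod.ext_iff]
  simp [funext_iff, Prod.ext_iff, Subtype.forall, forall_and]

lemma mem_kerWZ (g : (Fin K ⊕ Fin (K-1)) → (Fin L → ZMod q)) :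
    g ∈ ((phiW q K L).prod (phiZ q K L T)).ker ↔
      ((∀ k, g (Sum.inl k) = 0) ∧ g ∈ (phiZ q K L T).ker) := by
  rw [AddMonoidHom.mem_ker, AddMonoidHom.prod_apply, Prod.ext_iff, AddMonoidHom.mem_ker]
  constructor
  · rintro ⟨h1, h2⟩
    exact ⟨fun k => congrFun h1 k, h2⟩
  · rintro ⟨h1, h2⟩
    exact ⟨funext h1, h2⟩

lemma mem_kerYZ (g : (Fin K ⊕ Fin (K-1)) → (Fin L → ZMod q)) :
    g ∈ ((phiY q K L).prod (phiZ q K L T)).ker ↔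
      ((∀ k, g (Sum.inl k) + ntotF q K L g k = 0) ∧ g ∈ (phiZ q K L T).ker) := by
  rw [AddMonoidHom.mem_ker, AddMonoidHom.prod_apply, Prod.ext_iff, AddMonoidHom.mem_ker]
  constructor
  · rintro ⟨h1, h2⟩
    exact ⟨fun k => congrFun h1 k, h2⟩
  · rintro ⟨h1, h2⟩
    exact ⟨funext h1, h2⟩

lemma kerTriv :
    Nat.card (((phiW q K L).prod (phiY q K L)).prod (phiZ q K L T)).ker = 1 := by
  rw [Nat.card_eq_one_iff_unique]
  have key : ∀ x ∈ (((phiW q K L).prod (phiY q K L)).prod (phiZ q K L T)).ker, x = 0 := by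
    intro x hx
    rw [AddMonoidHom.mem_ker, AddMonoidHom.prod_apply, AddMonoidHom.prod_apply] at hx
    obtain ⟨⟨hW, hY⟩, -⟩ : ((phiW q K L) x = 0 ∧ (phiY q K L) x = 0) ∧ _ := by
      simpa [Prod.ext_iff] using hx
    have hWk : ∀ k, x (Sum.inl k) = 0 := fun k => congrFun hW k
    have hNk : ∀ k, ntotF q K L x k = 0 := by
      intro k
      have := congrFun hY k
      rw [phiY_apply, hWk k, zero_add] at this
      exact this
    funext i
    cases i with
    | inl k => exact hWk k
    | inr j =>
      have := hNk (embFin K j)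
      rwa [ntotF_emb] at this
  constructor
  · exact ⟨fun a b => Subtype.ext ((key a.1 a.2).trans (key b.1 b.2).symm)⟩
  · exact ⟨0, (((phiW q K L).prod (phiY q K L)).prod (phiZ q K L T)).ker.zero_mem⟩

lemma kerProd (hK : 1 ≤ K) :
    Nat.card (phiZ q K L T).ker =
      Nat.card ((phiW q K L).prod (phiZ q K L T)).ker *
        Nat.card ((phiY q K L).prod (phiZ q K L T)).ker := by
  rw [← Nat.card_prod]
  refine Nat.card_congr ?_
  refine Equiv.ofBijective (fun x => (⟨x.1 - bmap q K L x.1, ?_⟩, ⟨bmap q K L x.1, ?_⟩))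
      ⟨?_, ?_⟩
  · -- x.1 - bmap x.1 ∈ ker (W, Z)
    obtain ⟨hsum, hT⟩ := (mem_kerZ q K L T x.1).mp x.2
    rw [mem_kerWZ]
    constructor
    · intro k
      show x.1 (Sum.inl k) - bmap q K L x.1 (Sum.inl k) = 0
      simp [bmap]
    · rw [mem_kerZ]
      have hnb := ntotF_bmap q K L hK x.1 hsum
      constructor
      · have : ∀ k, (x.1 - bmap q K L x.1) (Sum.inl k) = 0 := by
          intro k; show x.1 (Sum.inl k) - bmap q K L x.1 (Sum.inl k) = 0; simp [bmap]
        simp [this]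
      · intro k hk
        have h1 : (x.1 - bmap q K L x.1) (Sum.inl k) = 0 := by
          show x.1 (Sum.inl k) - bmap q K L x.1 (Sum.inl k) = 0; simp [bmap]
        refine ⟨h1, ?_⟩
        rw [map_sub]
        have h2 : ntotF q K L (bmap q K L x.1) k = -x.1 (Sum.inl k) := congrFun hnb k
        have h3 : ntotF q K L x.1 k = 0 := (hT k hk).2
        simp only [Pi.sub_apply, h2, h3]
        rw [(hT k hk).1]
        simp
  · -- bmap x.1 ∈ ker (Y, Z)
    obtain ⟨hsum, hT⟩ := (mem_kerZ q K L T x.1).mp x.2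
    have hnb := ntotF_bmap q K L hK x.1 hsum
    rw [mem_kerYZ]
    constructor
    · intro k
      rw [congrFun hnb k]
      show x.1 (Sum.inl k) + -x.1 (Sum.inl k) = 0
      simp
    · rw [mem_kerZ]
      refine ⟨hsum, fun k hk => ⟨(hT k hk).1, ?_⟩⟩
      rw [congrFun hnb k, (hT k hk).1, neg_zero]
  · -- injective
    intro a b hab
    simp only [Prod.mk.injEq, Subtype.mk.injEq] at hab
    obtain ⟨h1, h2⟩ := hab
    apply Subtype.ext
    have := congrArg₂ (· + ·) h1 h2
    simpa using this
  · -- surjective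
    rintro ⟨⟨a, ha⟩, ⟨b, hb⟩⟩
    obtain ⟨haW, haZ⟩ := (mem_kerWZ q K L T a).mp ha
    obtain ⟨hbY, hbZ⟩ := (mem_kerYZ q K L T b).mp hb
    refine ⟨⟨a + b, ?_⟩, ?_⟩
    · exact AddSubgroup.add_mem _ haZ hbZ
    · have hbmap : bmap q K L (a + b) = b := by
        funext i
        cases i with
        | inl k =>
          show (a + b) (Sum.inl k) = b (Sum.inl k)
          simp [haW k]
        | inr j =>
          show -(a + b) (Sum.inl (embFin K j)) = b (Sum.inr j)
          have h1 : b (Sum.inl (embFin K j)) + ntotF q K L b (embFin K j) = 0 := hbY _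
          rw [ntotF_emb] at h1
          have : b (Sum.inr j) = -b (Sum.inl (embFin K j)) := by
            have := neg_eq_of_add_eq_zero_right h1
            rw [← this]
          rw [this]
          simp [haW (embFin K j)]
      simp only [Prod.mk.injEq, Subtype.mk.injEq]
      rw [hbmap]
      constructor
      · abel
      · rfl

end ker

end helpers


theorem stmt7
    (q K L : ℕ) [NeZero q] (hq : IsPrimePow q) (hK : 2 ≤ K) (hL : 1 ≤ L)
    {Ω : Type*} [MeasurableSpace Ω] (μ : Measure Ω) [IsProbabilityMeasure μ]
    (W : Fin K → Ω → (Fin L → ZMod q))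
    (N : Fin (K - 1) → Ω → (Fin L → ZMod q))
    (hWmeas : ∀ k, Measurable (W k)) (hNmeas : ∀ j, Measurable (N j))
    (hunif : ∀ i : Fin K ⊕ Fin (K - 1), IsUnif μ (Sum.elim W N i))
    (hindep : iIndepFun (Sum.elim W N) μ)
    (Ntot : Fin K → Ω → (Fin L → ZMod q))
    (hNtot : ∀ k : Fin K, Ntot k =
      if h : (k : ℕ) < K - 1 then N ⟨k, h⟩ else fun ω => -(∑ j, N j ω))
    (X : Fin K → Ω → (Fin L → ZMod q))
    (hX : ∀ k, X k = fun ω => W k ω + Ntot k ω) :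
    (∀ᵐ ω ∂μ, ∑ k, X k ω = ∑ k, W k ω) ∧
      ∀ T : Finset (Fin K),
        condMI μ (fun ω => fun k => W k ω) (fun ω => fun k => X k ω)
          (fun ω => (∑ k, W k ω,
            fun k : {k : Fin K // k ∈ T} => (W k.1 ω, Ntot k.1 ω))) = 0 := by
  classical
  have hK1 : 1 ≤ K := by omega
  -- the joint source
  set U : Ω → ((Fin K ⊕ Fin (K-1)) → (Fin L → ZMod q)) := fun ω i => Sum.elim W N i ω with hUdef
  have hUmeas : Measurable U := by
    apply measurable_pi_lambda
    rintro (k | j)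
    · exact hWmeas k
    · exact hNmeas j
  have hUunif : ∀ g, μ (U ⁻¹' {g})
      = (Fintype.card ((Fin K ⊕ Fin (K-1)) → (Fin L → ZMod q)) : ENNReal)⁻¹ := by
    intro g
    have hpre : U ⁻¹' {g} = ⋂ i, (Sum.elim W N i) ⁻¹' {g i} := by
      ext ω
      simp [hUdef, funext_iff]
    rw [hpre]
    have hii := (iIndepFun_iff_measure_inter_preimage_eq_mul.mp hindep) Finset.univ
      (sets := fun i => {g i}) (fun i _ => measurableSet_singleton _)
    simp only [Finset.mem_univ, Set.iInter_true] at hii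
    rw [hii, Finset.prod_congr rfl (fun i _ => hunif i (g i)), Finset.prod_const,
      ← ENNReal.inv_pow]
    congr 1
    rw [← Nat.cast_pow]
    congr 1
    rw [Finset.card_univ]
    simp [Fintype.card_fun, ← pow_mul, mul_comm]
  -- translation : ntotF evaluated on U equals Ntot
  have hnt : ∀ (ω : Ω) (k : Fin K), ntotF q K L (U ω) k = Ntot k ω := by
    intro ω k
    by_cases h : (k:ℕ) < K-1
    · rw [ntotF_pos q K L _ k h, hNtot k, dif_pos h]
      rfl
    · rw [ntotF_neg q K L _ k h, hNtot k, dif_neg h]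
      show -∑ j, N j ω = -(∑ j, N j ω)
      rfl
  constructor
  · -- correctness
    refine Filter.Eventually.of_forall (fun ω => ?_)
    have hsumN : ∑ k, Ntot k ω = 0 := by
      have hB := helperB (M := Fin L → ZMod q) (K := K) hK1 (fun j => N j ω)
      rw [← hB]
      refine Finset.sum_congr rfl (fun k _ => ?_)
      rw [hNtot k]
      by_cases h : (k:ℕ) < K-1
      · rw [dif_pos h, dif_pos h]
      · rw [dif_neg h, dif_neg h]
    calc ∑ k, X k ω = ∑ k, (W k ω + Ntot k ω) := by
          exact Finset.sum_congr rfl (fun k _ => by rw [hX k])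
      _ = (∑ k, W k ω) + ∑ k, Ntot k ω := Finset.sum_add_distrib
      _ = ∑ k, W k ω := by rw [hsumN, add_zero]
  · -- security
    intro T
    have hfunA : (fun ω => fun k => W k ω) = fun ω => phiW q K L (U ω) := rfl
    have hfunB : (fun ω => fun k => X k ω) = fun ω => phiY q K L (U ω) := by
      funext ω
      funext k
      rw [hX k]
      show W k ω + Ntot k ω = U ω (Sum.inl k) + ntotF q K L (U ω) k
      rw [hnt ω k]
      rfl
    have hfunC : (fun ω => ((∑ k, W k ω : Fin L → ZMod q),
          fun k : {k : Fin K // k ∈ T} => (W k.1 ω, Ntot k.1 ω)))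
        = fun ω => phiZ q K L T (U ω) := by
      funext ω
      rw [phiZ_apply]
      refine Prod.ext rfl ?_
      funext k
      refine Prod.ext rfl ?_
      show Ntot k.1 ω = ntotF q K L (U ω) k.1
      rw [hnt ω k.1]
    rw [hfunA, hfunB, hfunC]
    unfold condMI condEntr
    have h1 : entr μ (fun ω => (phiW q K L (U ω), phiZ q K L T (U ω)))
        = Real.log (Fintype.card ((Fin K ⊕ Fin (K-1)) → (Fin L → ZMod q)))
          - Real.log (Nat.card ((phiW q K L).prod (phiZ q K L T)).ker) :=
      entr_comp_hom U hUmeas hUunif ((phiW q K L).prod (phiZ q K L T))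
    have h2 : entr μ (fun ω => (phiY q K L (U ω), phiZ q K L T (U ω)))
        = Real.log (Fintype.card ((Fin K ⊕ Fin (K-1)) → (Fin L → ZMod q)))
          - Real.log (Nat.card ((phiY q K L).prod (phiZ q K L T)).ker) :=
      entr_comp_hom U hUmeas hUunif ((phiY q K L).prod (phiZ q K L T))
    have h3 : entr μ (fun ω => ((phiW q K L (U ω), phiY q K L (U ω)), phiZ q K L T (U ω)))
        = Real.log (Fintype.card ((Fin K ⊕ Fin (K-1)) → (Fin L → ZMod q)))
          - Real.log (Nat.card (((phiW q K L).prod (phiY q K L)).prod (phiZ q K L T)).ker) :=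
      entr_comp_hom U hUmeas hUunif (((phiW q K L).prod (phiY q K L)).prod (phiZ q K L T))
    have h4 : entr μ (fun ω => phiZ q K L T (U ω))
        = Real.log (Fintype.card ((Fin K ⊕ Fin (K-1)) → (Fin L → ZMod q)))
          - Real.log (Nat.card (phiZ q K L T).ker) :=
      entr_comp_hom U hUmeas hUunif (phiZ q K L T)
    rw [h1, h2, h3, h4, kerTriv, kerProd q K L T hK1]
    have ha : (0:ℝ) < Nat.card ((phiW q K L).prod (phiZ q K L T)).ker := by
      exact_mod_cast Nat.card_pos
    have hb : (0:ℝ) < Nat.card ((phiY q K L).prod (phiZ q K L T)).ker := by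
      exact_mod_cast Nat.card_pos
    rw [Nat.cast_one, Real.log_one, Nat.cast_mul, Real.log_mul ha.ne' hb.ne']
    ring
end

section
/- Consider the secure summation model with symmetric groupwise keys of group size G, with K ≥ 2 users, 0 ≤ T ≤ K−2 and G ≤ K−T. If correctness holds and security holds against some colluding set T' ⊆ {1,…,K} with |T'| = T, then the groupwise key length satisfies (K−T−1)·L ≤ C(K−T, G)·L_S, where C(·,·) is the binomial coefficient. Equivalently, the groupwise key rate satisfies R_S = L_S/L ≥ (K−T−1)/C(K−T, G). -/
open MeasureTheory ProbabilityTheory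

set_option linter.unusedSectionVars false
set_option maxHeartbeats 1000000

namespace Stmt9Aux
open Real


/-- splitting a sum of `negMulLog` into total mass and conditional part -/
lemma sum_negMulLog_eq {α : Type*} [Fintype α] {r : α → ℝ} (h0 : ∀ a, 0 ≤ r a) :
    ∑ a, negMulLog (r a)
      = negMulLog (∑ a, r a) + (∑ a, r a) * ∑ a, negMulLog (r a / ∑ a, r a) := by
  set s := ∑ a, r a with hs
  rcases eq_or_lt_of_le (Finset.sum_nonneg (fun a _ => h0 a)) with h | h
  · have hall : ∀ a, r a = 0 := by
      intro a
      have := Finset.sum_eq_zero_iff_of_nonneg (fun a _ => h0 a) |>.mp h.symm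
      exact this a (Finset.mem_univ a)
    have hs0 : s = 0 := by rw [hs, ← h]
    simp [hall, hs0]
  · have hsne : s ≠ 0 := by rw [hs]; exact ne_of_gt h
    have key : ∀ a, negMulLog (r a) = (r a / s) * negMulLog s + s * negMulLog (r a / s) := by
      intro a
      have hr : r a = s * (r a / s) := by field_simp
      calc negMulLog (r a) = negMulLog (s * (r a / s)) := by rw [← hr]
        _ = (r a / s) * negMulLog s + s * negMulLog (r a / s) := negMulLog_mul s (r a / s)
    rw [Finset.sum_congr rfl (fun a _ => key a)]
    rw [Finset.sum_add_distrib, ← Finset.sum_mul, ← Finset.mul_sum]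
    have h1 : ∑ a, r a / s = 1 := by rw [← Finset.sum_div, ← hs]; field_simp
    rw [h1, one_mul]

/-- Jensen step for the submodularity of entropy. -/
lemma jensen_step {β : Type*} [Fintype β] {x w : β → ℝ}
    (hw : ∀ b, 0 ≤ w b) (hx0 : ∀ b, 0 ≤ x b) (hxw : ∀ b, x b ≤ w b) :
    ∑ b, w b * negMulLog (x b / w b)
      ≤ (∑ b, w b) * negMulLog ((∑ b, x b) / (∑ b, w b)) := by
  set s := ∑ b, w b with hs
  rcases eq_or_lt_of_le (Finset.sum_nonneg (fun b _ => hw b)) with h | h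
  · have hallw : ∀ b, w b = 0 := fun b =>
      (Finset.sum_eq_zero_iff_of_nonneg (fun b _ => hw b)).mp h.symm b (Finset.mem_univ b)
    have hs0 : s = 0 := by rw [hs, ← h]
    simp [hallw, hs0]
  · have hspos : 0 < s := by rw [hs]; exact h
    have hsne : s ≠ 0 := ne_of_gt hspos
    have hxb0 : ∀ b, w b = 0 → x b = 0 := fun b hb => le_antisymm (hb ▸ hxw b) (hx0 b)
    have jensen := Real.concaveOn_negMulLog.le_map_sum (t := Finset.univ)
      (w := fun b => w b / s) (p := fun b => x b / w b)
      (fun b _ => div_nonneg (hw b) hspos.le)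
      (by rw [← Finset.sum_div, ← hs]; field_simp)
      (fun b _ => Set.mem_Ici.mpr (div_nonneg (hx0 b) (hw b)))
    have hpt : ∀ b, (w b / s) • (x b / w b) = x b / s := by
      intro b
      rcases eq_or_ne (w b) 0 with hb | hb
      · simp [hb, hxb0 b hb]
      · simp only [smul_eq_mul]
        field_simp
    rw [Finset.sum_congr rfl (fun b _ => hpt b), ← Finset.sum_div] at jensen
    have expand : ∑ b, w b * negMulLog (x b / w b)
        = s * ∑ b, (w b / s) • negMulLog (x b / w b) := by
      rw [Finset.mul_sum]
      refine Finset.sum_congr rfl (fun b _ => ?_)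
      simp only [smul_eq_mul]
      field_simp
    rw [expand]
    exact mul_le_mul_of_nonneg_left jensen hspos.le

/-- From Jensen: entropy is at most log of the cardinality. -/
lemma sum_negMulLog_le_log_card {α : Type*} [Fintype α] [Nonempty α] {p : α → ℝ}
    (h0 : ∀ a, 0 ≤ p a) (h1 : ∑ a, p a = 1) :
    ∑ a, negMulLog (p a) ≤ Real.log (Fintype.card α) := by
  have hN : (0:ℝ) < Fintype.card α := by positivity
  have jensen := Real.concaveOn_negMulLog.le_map_sum (t := Finset.univ)
    (w := fun _ : α => (Fintype.card α : ℝ)⁻¹) (p := p)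
    (fun a _ => by positivity)
    (by simp [Finset.card_univ])
    (fun a _ => Set.mem_Ici.mpr (h0 a))
  simp only [smul_eq_mul, ← Finset.mul_sum, h1, mul_one] at jensen
  have hm : negMulLog (Fintype.card α : ℝ)⁻¹
      = (Fintype.card α : ℝ)⁻¹ * Real.log (Fintype.card α) := by
    rw [negMulLog, Real.log_inv]; ring
  rw [hm] at jensen
  have := mul_le_mul_of_nonneg_left jensen hN.le
  calc ∑ a, negMulLog (p a)
      = (Fintype.card α : ℝ) * ((Fintype.card α : ℝ)⁻¹ * ∑ a, negMulLog (p a)) := by field_simp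
    _ ≤ (Fintype.card α : ℝ) * ((Fintype.card α : ℝ)⁻¹ * Real.log (Fintype.card α)) := this
    _ = Real.log (Fintype.card α) := by field_simp

variable {Ω : Type*} [MeasurableSpace Ω] {μ : Measure Ω} [IsProbabilityMeasure μ]
variable {α β γ : Type*}
  [Fintype α] [MeasurableSpace α] [MeasurableSingletonClass α]
  [Fintype β] [MeasurableSpace β] [MeasurableSingletonClass β]
  [Fintype γ] [MeasurableSpace γ] [MeasurableSingletonClass γ]

/-- probability mass function of a random variable -/
noncomputable def pm (μ : Measure Ω) {α : Type*} (X : Ω → α) (a : α) : ℝ :=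
  (μ (X ⁻¹' {a})).toReal

lemma pm_nonneg (X : Ω → α) (a : α) : 0 ≤ pm μ X a := ENNReal.toReal_nonneg

lemma pm_le_one (X : Ω → α) (a : α) : pm μ X a ≤ 1 := by
  rw [pm, ← ENNReal.toReal_one]
  exact ENNReal.toReal_mono ENNReal.one_ne_top prob_le_one

lemma entr_eq_sum_pm {X : Ω → α} (hX : Measurable X) :
    entr μ X = ∑ a, negMulLog (pm μ X a) := by
  unfold entr pm
  refine Finset.sum_congr rfl (fun a _ => ?_)
  rw [Measure.map_apply hX (measurableSet_singleton a)]

lemma sum_pm_eq_one {X : Ω → α} (hX : Measurable X) : ∑ a, pm μ X a = 1 := by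
  have h : ∑ a : α, μ (X ⁻¹' {a}) = 1 := by
    rw [sum_measure_preimage_singleton Finset.univ
      (fun a _ => hX (measurableSet_singleton a))]
    simp
  unfold pm
  rw [← ENNReal.toReal_sum (fun a _ => measure_ne_top μ _), h, ENNReal.toReal_one]

lemma measure_partition {Y : Ω → β} (hY : Measurable Y) {s : Set Ω} (hs : MeasurableSet s) :
    μ s = ∑ b : β, μ (s ∩ Y ⁻¹' {b}) := by
  have hdisj : Set.PairwiseDisjoint (↑(Finset.univ : Finset β)) (fun b => s ∩ Y ⁻¹' {b}) := by
    intro b _ c _ hbc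
    simp only [Function.onFun]
    rw [Set.disjoint_left]
    rintro ω ⟨_, hb⟩ ⟨_, hc⟩
    exact hbc (by simp only [Set.mem_preimage, Set.mem_singleton_iff] at hb hc; rw [← hb, ← hc])
  have hmeas : ∀ b ∈ (Finset.univ : Finset β), MeasurableSet (s ∩ Y ⁻¹' {b}) :=
    fun b _ => hs.inter (hY (measurableSet_singleton b))
  have key := measure_biUnion_finset (μ := μ) hdisj hmeas
  have hcover : ⋃ b ∈ (Finset.univ : Finset β), s ∩ Y ⁻¹' {b} = s := by
    ext ω; simp
  rw [hcover] at key
  exact key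

lemma preimage_pair_singleton (X : Ω → α) (Y : Ω → β) (a : α) (b : β) :
    (fun ω => (X ω, Y ω)) ⁻¹' {(a, b)} = X ⁻¹' {a} ∩ Y ⁻¹' {b} := by
  ext ω; simp [Prod.ext_iff]

lemma pm_pair_snd {X : Ω → α} {Y : Ω → β} (hX : Measurable X) (hY : Measurable Y) (b : β) :
    ∑ a, pm μ (fun ω => (X ω, Y ω)) (a, b) = pm μ Y b := by
  unfold pm
  rw [← ENNReal.toReal_sum (fun a _ => measure_ne_top μ _)]
  congr 1
  rw [measure_partition (μ := μ) hX (hY (measurableSet_singleton b))]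
  refine (Finset.sum_congr rfl (fun a _ => ?_)).symm
  rw [preimage_pair_singleton, Set.inter_comm]

lemma pm_pair_le_snd {X : Ω → α} {Y : Ω → β} (a : α) (b : β) :
    pm μ (fun ω => (X ω, Y ω)) (a, b) ≤ pm μ Y b := by
  unfold pm
  apply ENNReal.toReal_mono (measure_ne_top μ _)
  apply measure_mono
  rw [preimage_pair_singleton]
  exact Set.inter_subset_right

lemma entr_nonneg {X : Ω → α} (hX : Measurable X) : 0 ≤ entr μ X := by
  rw [entr_eq_sum_pm hX]
  exact Finset.sum_nonneg (fun a _ => negMulLog_nonneg (pm_nonneg X a) (pm_le_one X a))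

lemma entr_le_log_card [Nonempty α] {X : Ω → α} (hX : Measurable X) :
    entr μ X ≤ Real.log (Fintype.card α) := by
  rw [entr_eq_sum_pm hX]
  exact sum_negMulLog_le_log_card (fun a => pm_nonneg X a) (sum_pm_eq_one hX)

lemma entr_comp_inj {X : Ω → α} (hX : Measurable X) {g : α → β}
    (hg : Function.Injective g) :
    entr μ (fun ω => g (X ω)) = entr μ X := by
  classical
  have hgX : Measurable (fun ω => g (X ω)) := (measurable_of_countable g).comp hX
  rw [entr_eq_sum_pm hgX, entr_eq_sum_pm hX]
  have hinside : ∀ a : α, pm μ (fun ω => g (X ω)) (g a) = pm μ X a := by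
    intro a
    show (μ _).toReal = (μ _).toReal
    congr 1
    congr 1
    ext ω
    simp [hg.eq_iff]
  have himg : ∑ b ∈ Finset.univ.image g, negMulLog (pm μ (fun ω => g (X ω)) b)
      = ∑ a : α, negMulLog (pm μ (fun ω => g (X ω)) (g a)) :=
    Finset.sum_image (fun a _ b _ h => hg h)
  have hzero : ∀ b ∈ (Finset.univ : Finset β), b ∉ Finset.univ.image g →
      negMulLog (pm μ (fun ω => g (X ω)) b) = 0 := by
    intro b _ hb
    have hb' : (fun ω => g (X ω)) ⁻¹' {b} = ∅ := by
      ext ω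
      simp only [Set.mem_preimage, Set.mem_singleton_iff, Set.mem_empty_iff_false, iff_false]
      intro h
      exact hb (Finset.mem_image.mpr ⟨X ω, Finset.mem_univ _, h⟩)
    simp [pm, hb']
  calc ∑ b : β, negMulLog (pm μ (fun ω => g (X ω)) b)
      = ∑ b ∈ Finset.univ.image g, negMulLog (pm μ (fun ω => g (X ω)) b) :=
        (Finset.sum_subset (Finset.subset_univ _) hzero).symm
    _ = ∑ a : α, negMulLog (pm μ (fun ω => g (X ω)) (g a)) := himg
    _ = ∑ a : α, negMulLog (pm μ X a) := by
        exact Finset.sum_congr rfl (fun a _ => by rw [hinside a])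


variable {Ω : Type*} [MeasurableSpace Ω] {μ : Measure Ω} [IsProbabilityMeasure μ]
variable {α β γ δ : Type*}
  [Fintype α] [MeasurableSpace α] [MeasurableSingletonClass α]
  [Fintype β] [MeasurableSpace β] [MeasurableSingletonClass β]
  [Fintype γ] [MeasurableSpace γ] [MeasurableSingletonClass γ]
  [Fintype δ] [MeasurableSpace δ] [MeasurableSingletonClass δ]

lemma condEntr_eq_sum {X : Ω → α} {Y : Ω → β} (hX : Measurable X) (hY : Measurable Y) :
    condEntr μ X Y = ∑ b, pm μ Y b *
      ∑ a, negMulLog (pm μ (fun ω => (X ω, Y ω)) (a, b) / pm μ Y b) := by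
  have hXY : Measurable (fun ω => (X ω, Y ω)) := hX.prodMk hY
  rw [condEntr, entr_eq_sum_pm hXY, entr_eq_sum_pm hY]
  rw [Fintype.sum_prod_type_right]
  have key : ∀ b : β, ∑ a, negMulLog (pm μ (fun ω => (X ω, Y ω)) (a, b))
      = negMulLog (pm μ Y b) + pm μ Y b *
        ∑ a, negMulLog (pm μ (fun ω => (X ω, Y ω)) (a, b) / pm μ Y b) := by
    intro b
    have := sum_negMulLog_eq (r := fun a => pm μ (fun ω => (X ω, Y ω)) (a, b))
      (fun a => pm_nonneg _ _)
    rw [pm_pair_snd hX hY b] at this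
    exact this
  rw [Finset.sum_congr rfl (fun b _ => key b), Finset.sum_add_distrib]
  ring

lemma condEntr_nonneg {X : Ω → α} {Y : Ω → β} (hX : Measurable X) (hY : Measurable Y) :
    0 ≤ condEntr μ X Y := by
  rw [condEntr_eq_sum hX hY]
  refine Finset.sum_nonneg (fun b _ => mul_nonneg (pm_nonneg _ _) ?_)
  refine Finset.sum_nonneg (fun a _ => ?_)
  rcases eq_or_ne (pm μ Y b) 0 with h0 | h0
  · have : pm μ (fun ω => (X ω, Y ω)) (a, b) = 0 :=
      le_antisymm (h0 ▸ pm_pair_le_snd a b) (pm_nonneg _ _)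
    simp [this]
  · exact negMulLog_nonneg (div_nonneg (pm_nonneg _ _) (pm_nonneg _ _))
      (div_le_one_of_le₀ (pm_pair_le_snd a b) (pm_nonneg _ _))

/-- marginalizing out the middle component -/
lemma pm_triple_marg {X : Ω → α} {Y : Ω → β} {Z : Ω → γ}
    (hX : Measurable X) (hY : Measurable Y) (hZ : Measurable Z) (a : α) (c : γ) :
    ∑ b, pm μ (fun ω => (X ω, (Y ω, Z ω))) (a, (b, c)) = pm μ (fun ω => (X ω, Z ω)) (a, c) := by
  unfold pm
  rw [← ENNReal.toReal_sum (fun b _ => measure_ne_top μ _)]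
  congr 1
  rw [measure_partition (μ := μ) hY
    ((hX.prodMk hZ) (measurableSet_singleton (a, c)))]
  refine (Finset.sum_congr rfl (fun b _ => ?_)).symm
  congr 1
  ext ω
  simp [Prod.ext_iff]
  tauto

/-- submodularity: extra conditioning reduces conditional entropy -/
lemma condEntr_pair_le {X : Ω → α} {Y : Ω → β} {Z : Ω → γ}
    (hX : Measurable X) (hY : Measurable Y) (hZ : Measurable Z) :
    condEntr μ X (fun ω => (Y ω, Z ω)) ≤ condEntr μ X Z := by
  have hYZ : Measurable (fun ω => (Y ω, Z ω)) := hY.prodMk hZ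
  rw [condEntr_eq_sum hX hYZ, condEntr_eq_sum hX hZ]
  rw [Fintype.sum_prod_type_right]
  refine Finset.sum_le_sum (fun c _ => ?_)
  rw [Finset.mul_sum]
  -- LHS: ∑ b, q2 (b,c) * ∑ a negMulLog (r3/q2) ; RHS: ∑ a, m c * negMulLog (p (a,c) / m c)
  have swap : ∀ b, pm μ (fun ω => (Y ω, Z ω)) (b, c) *
      ∑ a, negMulLog (pm μ (fun ω => (X ω, (Y ω, Z ω))) (a, (b, c)) /
        pm μ (fun ω => (Y ω, Z ω)) (b, c))
      = ∑ a, pm μ (fun ω => (Y ω, Z ω)) (b, c) *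
        negMulLog (pm μ (fun ω => (X ω, (Y ω, Z ω))) (a, (b, c)) /
          pm μ (fun ω => (Y ω, Z ω)) (b, c)) := fun b => Finset.mul_sum _ _ _
  rw [Finset.sum_congr rfl (fun b _ => swap b), Finset.sum_comm]
  refine Finset.sum_le_sum (fun a _ => ?_)
  have hjen := jensen_step (β := β)
    (x := fun b => pm μ (fun ω => (X ω, (Y ω, Z ω))) (a, (b, c)))
    (w := fun b => pm μ (fun ω => (Y ω, Z ω)) (b, c))
    (fun b => pm_nonneg _ _) (fun b => pm_nonneg _ _)
    (fun b => pm_pair_le_snd _ _)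
  rw [pm_triple_marg hX hY hZ a c] at hjen
  have hm : ∑ b, pm μ (fun ω => (Y ω, Z ω)) (b, c) = pm μ Z c := pm_pair_snd hY hZ c
  rw [hm] at hjen
  exact hjen

/-- `Det Y Z` : `Z` is a deterministic (pointwise) function of `Y`. -/
def Det {Ω β γ : Type*} (Y : Ω → β) (Z : Ω → γ) : Prop := ∃ g : β → γ, ∀ ω, Z ω = g (Y ω)

namespace Det

lemma refl {Ω β : Type*} (Y : Ω → β) : Det Y Y := ⟨id, fun _ => rfl⟩

lemma comp {Ω β γ δ : Type*} {X : Ω → β} {Y : Ω → γ} {Z : Ω → δ}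
    (h1 : Det X Y) (h2 : Det Y Z) : Det X Z := by
  obtain ⟨g, hg⟩ := h1; obtain ⟨f, hf⟩ := h2
  exact ⟨f ∘ g, fun ω => by simp [hf ω, hg ω]⟩

lemma pair {Ω β γ δ : Type*} {X : Ω → β} {Y : Ω → γ} {Z : Ω → δ}
    (h1 : Det X Y) (h2 : Det X Z) : Det X (fun ω => (Y ω, Z ω)) := by
  obtain ⟨g, hg⟩ := h1; obtain ⟨f, hf⟩ := h2
  exact ⟨fun x => (g x, f x), fun ω => by simp [hf ω, hg ω]⟩

lemma fst {Ω β γ : Type*} (Y : Ω → β) (Z : Ω → γ) : Det (fun ω => (Y ω, Z ω)) Y :=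
  ⟨Prod.fst, fun _ => rfl⟩

lemma snd {Ω β γ : Type*} (Y : Ω → β) (Z : Ω → γ) : Det (fun ω => (Y ω, Z ω)) Z :=
  ⟨Prod.snd, fun _ => rfl⟩

end Det

variable {Ω : Type*} [MeasurableSpace Ω] {μ : Measure Ω} [IsProbabilityMeasure μ]
variable {α β γ δ : Type*}
  [Fintype α] [MeasurableSpace α] [MeasurableSingletonClass α]
  [Fintype β] [MeasurableSpace β] [MeasurableSingletonClass β]
  [Fintype γ] [MeasurableSpace γ] [MeasurableSingletonClass γ]
  [Fintype δ] [MeasurableSpace δ] [MeasurableSingletonClass δ]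

/-- entropy only depends on the mutual-determinism class -/
lemma entr_eq_of_det {X : Ω → α} {Y : Ω → β} (hX : Measurable X) (hY : Measurable Y)
    (h1 : Det X Y) (h2 : Det Y X) : entr μ X = entr μ Y := by
  obtain ⟨g, hg⟩ := h1; obtain ⟨f, hf⟩ := h2
  have e1 : entr μ (fun ω => (X ω, Y ω)) = entr μ X := by
    have heq : (fun ω => (X ω, Y ω)) = (fun ω => ((fun x => (x, g x)) (X ω))) := by
      funext ω; simp [hg ω]
    rw [heq]
    exact entr_comp_inj (g := fun x => (x, g x)) hX (fun x y h => congrArg Prod.fst h)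
  have e2 : entr μ (fun ω => (X ω, Y ω)) = entr μ Y := by
    have heq : (fun ω => (X ω, Y ω)) = (fun ω => ((fun y => (f y, y)) (Y ω))) := by
      funext ω; simp [hf ω]
    rw [heq]
    exact entr_comp_inj (g := fun y => (f y, y)) hY (fun x y h => congrArg Prod.snd h)
  rw [← e1, e2]

lemma condEntr_congr_left {X : Ω → α} {X' : Ω → β} {Y : Ω → γ}
    (hX : Measurable X) (hX' : Measurable X') (hY : Measurable Y)
    (h1 : Det X X') (h2 : Det X' X) :
    condEntr μ X Y = condEntr μ X' Y := by
  unfold condEntr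
  have := entr_eq_of_det (μ := μ) (hX.prodMk hY) (hX'.prodMk hY)
    (by obtain ⟨g, hg⟩ := h1; exact ⟨fun p => (g p.1, p.2), fun ω => by simp [hg ω]⟩)
    (by obtain ⟨g, hg⟩ := h2; exact ⟨fun p => (g p.1, p.2), fun ω => by simp [hg ω]⟩)
  rw [this]

lemma condEntr_congr_right {X : Ω → α} {Y : Ω → β} {Y' : Ω → γ}
    (hX : Measurable X) (hY : Measurable Y) (hY' : Measurable Y')
    (h1 : Det Y Y') (h2 : Det Y' Y) :
    condEntr μ X Y = condEntr μ X Y' := by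
  unfold condEntr
  rw [entr_eq_of_det (μ := μ) hY hY' h1 h2,
    entr_eq_of_det (μ := μ) (hX.prodMk hY) (hX.prodMk hY')
    (by obtain ⟨g, hg⟩ := h1; exact ⟨fun p => (p.1, g p.2), fun ω => by simp [hg ω]⟩)
    (by obtain ⟨g, hg⟩ := h2; exact ⟨fun p => (p.1, g p.2), fun ω => by simp [hg ω]⟩)]

/-- a deterministic function of the conditioning has zero conditional entropy -/
lemma condEntr_eq_zero_of_det {X : Ω → α} {Y : Ω → β}
    (hX : Measurable X) (hY : Measurable Y) (h : Det Y X) :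
    condEntr μ X Y = 0 := by
  unfold condEntr
  rw [entr_eq_of_det (μ := μ) (hX.prodMk hY) hY (Det.snd X Y)
    (Det.pair h (Det.refl Y))]
  ring

/-- chain rule -/
lemma condEntr_chain {A : Ω → α} {B : Ω → β} {C : Ω → γ}
    (hA : Measurable A) (hB : Measurable B) (hC : Measurable C) :
    condEntr μ (fun ω => (A ω, B ω)) C
      = condEntr μ B C + condEntr μ A (fun ω => (B ω, C ω)) := by
  unfold condEntr
  have : entr μ (fun ω => ((A ω, B ω), C ω)) = entr μ (fun ω => (A ω, (B ω, C ω))) := by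
    apply entr_eq_of_det ((hA.prodMk hB).prodMk hC) (hA.prodMk (hB.prodMk hC))
    · exact ⟨fun p => (p.1.1, (p.1.2, p.2)), fun ω => rfl⟩
    · exact ⟨fun p => ((p.1, p.2.1), p.2.2), fun ω => rfl⟩
  rw [this]
  ring

/-- conditioning on a coarser variable gives larger conditional entropy -/
lemma condEntr_mono_cond {X : Ω → α} {Y : Ω → β} {Z : Ω → γ}
    (hX : Measurable X) (hY : Measurable Y) (hZ : Measurable Z)
    (h : Det Z Y) :
    condEntr μ X Z ≤ condEntr μ X Y := by
  have step : condEntr μ X Z = condEntr μ X (fun ω => (Z ω, Y ω)) := by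
    apply condEntr_congr_right (μ := μ) hX hZ (hZ.prodMk hY)
    · exact Det.pair (Det.refl Z) h
    · exact Det.fst Z Y
  rw [step]
  exact condEntr_pair_le (μ := μ) hX hZ hY

lemma entr_const_fin1 : entr μ (fun _ : Ω => (0 : Fin 1)) = 0 := by
  have hm : Measurable (fun _ : Ω => (0 : Fin 1)) := measurable_const
  rw [entr_eq_sum_pm hm]
  have : pm μ (fun _ : Ω => (0 : Fin 1)) 0 = 1 := by
    unfold pm
    have : (fun _ : Ω => (0 : Fin 1)) ⁻¹' {0} = Set.univ := by ext ω; simp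
    rw [this, measure_univ, ENNReal.toReal_one]
  rw [Fin.sum_univ_one, this, negMulLog_one]

lemma condEntr_le_entr {X : Ω → α} {Y : Ω → β}
    (hX : Measurable X) (hY : Measurable Y) :
    condEntr μ X Y ≤ entr μ X := by
  have h1 : condEntr μ X Y ≤ condEntr μ X (fun _ : Ω => (0 : Fin 1)) :=
    condEntr_mono_cond hX measurable_const hY ⟨fun _ => 0, fun _ => rfl⟩
  have h2 : condEntr μ X (fun _ : Ω => (0 : Fin 1)) = entr μ X := by
    unfold condEntr
    rw [entr_const_fin1]
    have : entr μ (fun ω => (X ω, (0 : Fin 1))) = entr μ X :=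
      entr_comp_inj (μ := μ) (g := fun x => (x, (0 : Fin 1))) hX
        (fun x y h => congrArg Prod.fst h)
    rw [this]
    ring
  exact h1.trans h2.le

/-- dropping a component of a pair reduces conditional entropy -/
lemma condEntr_le_pair_left {A : Ω → α} {B : Ω → β} {C : Ω → γ}
    (hA : Measurable A) (hB : Measurable B) (hC : Measurable C) :
    condEntr μ A C ≤ condEntr μ (fun ω => (A ω, B ω)) C := by
  have chain := condEntr_chain (μ := μ) hB hA hC
  have h2 : 0 ≤ condEntr μ B (fun ω => (A ω, C ω)) :=
    condEntr_nonneg hB (hA.prodMk hC)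
  have hBA : condEntr μ (fun ω => (B ω, A ω)) C = condEntr μ (fun ω => (A ω, B ω)) C :=
    condEntr_congr_left ((hB.prodMk hA)) ((hA.prodMk hB)) hC
      ⟨fun p => (p.2, p.1), fun ω => rfl⟩ ⟨fun p => (p.2, p.1), fun ω => rfl⟩
  linarith

/-- `H(X|Y) ≥ H(A|Y) - H(A|(X,Y))` (mutual information symmetry bound) -/
lemma condEntr_ge_sub {X : Ω → α} {A : Ω → β} {Y : Ω → γ}
    (hX : Measurable X) (hA : Measurable A) (hY : Measurable Y) :
    condEntr μ A Y - condEntr μ A (fun ω => (X ω, Y ω)) ≤ condEntr μ X Y := by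
  -- H((X,A)|Y) = H(A|Y) + H(X|(A,Y)) = H(X|Y) + H(A|(X,Y))
  have c1 := condEntr_chain (μ := μ) hX hA hY
  have c2 := condEntr_chain (μ := μ) hA hX hY
  have hsw : condEntr μ (fun ω => (X ω, A ω)) Y = condEntr μ (fun ω => (A ω, X ω)) Y :=
    condEntr_congr_left ((hX.prodMk hA)) ((hA.prodMk hX)) hY
      ⟨fun p => (p.2, p.1), fun ω => rfl⟩ ⟨fun p => (p.2, p.1), fun ω => rfl⟩
  have hnn : 0 ≤ condEntr μ X (fun ω => (A ω, Y ω)) :=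
    condEntr_nonneg hX (hA.prodMk hY)
  linarith

/-- If `A` is uniform and independent of `Y` (in the singleton-product sense),
then `H(A|Y) = log |α|`. -/
lemma condEntr_eq_log_card {A : Ω → α} {Y : Ω → β} [Nonempty α]
    (hA : Measurable A) (hY : Measurable Y)
    (h : ∀ (a : α) (y : β),
      μ (A ⁻¹' {a} ∩ Y ⁻¹' {y}) = (Fintype.card α : ENNReal)⁻¹ * μ (Y ⁻¹' {y})) :
    condEntr μ A Y = Real.log (Fintype.card α) := by
  have hcard : (0 : ℝ) < Fintype.card α := by positivity
  set c : ℝ := (Fintype.card α : ℝ)⁻¹ with hc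
  have hpm : ∀ (a : α) (y : β), pm μ (fun ω => (A ω, Y ω)) (a, y) = c * pm μ Y y := by
    intro a y
    unfold pm
    rw [preimage_pair_singleton, h a y, ENNReal.toReal_mul]
    congr 1
    rw [ENNReal.toReal_inv]
    simp [hc]
  have hAY : Measurable (fun ω => (A ω, Y ω)) := hA.prodMk hY
  rw [condEntr, entr_eq_sum_pm hAY, entr_eq_sum_pm hY]
  rw [Fintype.sum_prod_type]
  have step : ∀ a : α, ∑ y, negMulLog (pm μ (fun ω => (A ω, Y ω)) (a, y))
      = ∑ y, (pm μ Y y * negMulLog c + c * negMulLog (pm μ Y y)) := by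
    intro a
    refine Finset.sum_congr rfl (fun y _ => ?_)
    rw [hpm a y, negMulLog_mul]
  rw [Finset.sum_congr rfl (fun a _ => step a)]
  rw [Finset.sum_const, Finset.card_univ, nsmul_eq_mul]
  rw [Finset.sum_add_distrib, ← Finset.sum_mul, sum_pm_eq_one hY, ← Finset.mul_sum]
  have hc1 : (Fintype.card α : ℝ) * c = 1 := by rw [hc]; field_simp
  have hklog : (Fintype.card α : ℝ) * negMulLog c = Real.log (Fintype.card α) := by
    rw [negMulLog, hc, Real.log_inv]
    field_simp
  rw [mul_add, ← mul_assoc, ← mul_assoc, hc1]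
  rw [mul_one, one_mul]
  rw [hklog]
  ring

end Stmt9Aux

open Stmt9Aux Real in
/-- for secure summation with symmetric groupwise keys of group size
`G ≤ K − T`, correctness and security against a colluding set of size `T` force the
groupwise key length to satisfy `(K−T−1)·L ≤ C(K−T, G)·L_S`, i.e.
`R_S ≥ (K−T−1)/C(K−T, G)`. -/
theorem stmt9
    (q K L LX LS T G : ℕ) [NeZero q] (hq : IsPrimePow q) (hK : 2 ≤ K)
    (hT : T ≤ K - 2) (hL : 1 ≤ L) (hLX : 1 ≤ LX)
    (hG1 : 1 ≤ G) (hGT : G ≤ K - T)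
    {Ω : Type*} [MeasurableSpace Ω] (μ : Measure Ω) [IsProbabilityMeasure μ]
    (W : Fin K → Ω → (Fin L → ZMod q))
    (S : {g : Finset (Fin K) // g.card = G} → Ω → (Fin LS → ZMod q))
    (X : Fin K → Ω → (Fin LX → ZMod q))
    (hWmeas : ∀ k, Measurable (W k)) (hSmeas : ∀ g, Measurable (S g))
    (hWunif : ∀ k, IsUnif μ (W k)) (hSunif : ∀ g, IsUnif μ (S g))
    (hWindep : iIndepFun W μ)
    (hSindep : iIndepFun S μ)
    (hWSindep : IndepFun (fun ω => fun k => W k ω) (fun ω => fun g => S g ω) μ)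
    (f : ∀ k : Fin K, (Fin L → ZMod q) →
      (∀ _g : {g : Finset (Fin K) // g.card = G ∧ k ∈ g}, Fin LS → ZMod q) →
      (Fin LX → ZMod q))
    (hX : ∀ k, X k = fun ω => f k (W k ω)
      (fun g : {g : Finset (Fin K) // g.card = G ∧ k ∈ g} => S ⟨g.1, g.2.1⟩ ω))
    (hXmeas : ∀ k, Measurable (X k))
    (hCorrect : condEntr μ (fun ω => ∑ k, W k ω) (fun ω => fun k => X k ω) = 0)
    (T' : Finset (Fin K)) (hT' : T'.card = T)
    (hSec : condMI μ (fun ω => fun k => W k ω) (fun ω => fun k => X k ω)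
      (fun ω => (∑ k, W k ω,
        fun k : {k : Fin K // k ∈ T'} => (W k.1 ω,
          fun g : {g : Finset (Fin K) // g.card = G ∧ k.1 ∈ g} => S ⟨g.1, g.2.1⟩ ω))) = 0) :
    (K - T - 1) * L ≤ Nat.choose (K - T) G * LS := by
  classical
  -- basic random variables
  set Wt : Ω → (Fin K → (Fin L → ZMod q)) := fun ω => fun k => W k ω with hWt
  set St : Ω → ({g : Finset (Fin K) // g.card = G} → (Fin LS → ZMod q)) :=
    fun ω => fun g => S g ω with hSt
  set Xt : Ω → (Fin K → (Fin LX → ZMod q)) := fun ω => fun k => X k ω with hXt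
  set Sm : Ω → (Fin L → ZMod q) := fun ω => ∑ k, W k ω with hSm
  set D : Ω → (∀ _k : {k : Fin K // k ∈ T'}, (Fin L → ZMod q) ×
      (∀ _g : {g : Finset (Fin K) // g.card = G ∧ _k.1 ∈ g}, Fin LS → ZMod q)) :=
    fun ω => fun k => (W k.1 ω,
      fun g : {g : Finset (Fin K) // g.card = G ∧ k.1 ∈ g} => S ⟨g.1, g.2.1⟩ ω) with hD
  set Vc := fun ω => (Sm ω, D ω) with hVc
  set SU : Ω → ({g : Finset (Fin K) // g.card = G ∧ g ⊆ T'ᶜ} → (Fin LS → ZMod q)) :=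
    fun ω => fun g => S ⟨g.1, g.2.1⟩ ω with hSU
  set XU : Ω → ({k : Fin K // k ∈ T'ᶜ} → (Fin LX → ZMod q)) :=
    fun ω => fun k => X k.1 ω with hXU
  -- measurability infrastructure
  have hWtm : Measurable Wt := measurable_pi_lambda _ (fun k => hWmeas k)
  have hStm : Measurable St := measurable_pi_lambda _ (fun g => hSmeas g)
  set Base : Ω → (Fin K → (Fin L → ZMod q)) ×
      ({g : Finset (Fin K) // g.card = G} → (Fin LS → ZMod q)) :=
    fun ω => (Wt ω, St ω) with hBase
  have hBasem : Measurable Base := hWtm.prodMk hStm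
  have mdet : ∀ {δ : Type} [MeasurableSpace δ] {Z : Ω → δ}, Det Base Z → Measurable Z := by
    intro δ _ Z hZ
    obtain ⟨g, hg⟩ := hZ
    have hz : Z = fun ω => g (Base ω) := funext hg
    rw [hz]
    exact (measurable_of_countable g).comp hBasem
  have dWt : Det Base Wt := Det.fst Wt St
  have dSt : Det Base St := Det.snd Wt St
  have dW : ∀ k, Det Base (W k) := fun k => ⟨fun p => p.1 k, fun ω => rfl⟩
  have dS : ∀ g, Det Base (S g) := fun g => ⟨fun p => p.2 g, fun ω => rfl⟩
  have dX : ∀ k, Det Base (X k) :=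
    fun k => ⟨fun p => f k (p.1 k) (fun g => p.2 ⟨g.1, g.2.1⟩),
      fun ω => by simp only [hX, hBase, hWt, hSt]⟩
  have dXt : Det Base Xt :=
    ⟨fun p => fun k => f k (p.1 k) (fun g => p.2 ⟨g.1, g.2.1⟩),
      fun ω => by funext k; simp only [hXt, hX, hBase, hWt, hSt]⟩
  have dSm : Det Base Sm := ⟨fun p => ∑ k, p.1 k, fun ω => rfl⟩
  have dD : Det Base D := ⟨fun p => fun k => (p.1 k.1, fun g => p.2 ⟨g.1, g.2.1⟩), fun ω => rfl⟩
  have dVc : Det Base Vc := Det.pair dSm dD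
  have dSU : Det Base SU := ⟨fun p => fun g => p.2 ⟨g.1, g.2.1⟩, fun ω => rfl⟩
  have dXU : Det Base XU :=
    ⟨fun p => fun k => f k.1 (p.1 k.1) (fun g => p.2 ⟨g.1, g.2.1⟩),
      fun ω => by funext k; simp only [hXU, hX, hBase, hWt, hSt]⟩
  -- numeric facts
  have hq2 : (1:ℝ) < q := by exact_mod_cast hq.one_lt
  have hlq : 0 < Real.log q := Real.log_pos hq2
  have cardV : Fintype.card (Fin L → ZMod q) = q ^ L := by
    simp [Fintype.card_fun, ZMod.card]
  have logV : Real.log (Fintype.card (Fin L → ZMod q)) = L * Real.log q := by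
    rw [cardV]; push_cast; rw [Real.log_pow]
  have cardιU : Fintype.card {g : Finset (Fin K) // g.card = G ∧ g ⊆ T'ᶜ}
      = (K - T).choose G := by
    rw [Fintype.card_subtype]
    have hfp : Finset.univ.filter (fun g : Finset (Fin K) => g.card = G ∧ g ⊆ T'ᶜ)
        = Finset.powersetCard G T'ᶜ := by
      ext g; simp [Finset.mem_powersetCard, and_comm]
    rw [hfp, Finset.card_powersetCard, Finset.card_compl, Fintype.card_fin, hT']
  have logSU : Real.log (Fintype.card
        ({g : Finset (Fin K) // g.card = G ∧ g ⊆ T'ᶜ} → (Fin LS → ZMod q)))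
      = ((K - T).choose G : ℝ) * (LS * Real.log q) := by
    rw [Fintype.card_fun]
    have : Fintype.card (Fin LS → ZMod q) = q ^ LS := by
      simp [Fintype.card_fun, ZMod.card]
    rw [this, ← pow_mul, cardιU]
    push_cast
    rw [Real.log_pow]
    push_cast
    ring
  -- measurabilities
  have mSU : Measurable SU := mdet dSU
  have mXU : Measurable XU := mdet dXU
  have mVc : Measurable Vc := mdet dVc
  have mD : Measurable D := mdet dD
  have mSm : Measurable Sm := mdet dSm
  have mXt : Measurable Xt := mdet dXt
  have mWt : Measurable Wt := mdet dWt
  set Y0 := fun ω => (Wt ω, Vc ω) with hY0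
  have dY0 : Det Base Y0 := Det.pair dWt dVc
  have mY0 : Measurable Y0 := mdet dY0
  -- (d) XU is a deterministic function of (SU, Y0)
  have dXU_SUY0 : Det (fun ω => (SU ω, Y0 ω)) XU := by
    refine ⟨fun p => fun k => f k.1 (p.2.1 k.1) (fun g =>
      if h : (g.1 ∩ T').Nonempty then
        (p.2.2.2 ⟨h.choose, (Finset.mem_inter.mp h.choose_spec).2⟩).2
          ⟨g.1, ⟨g.2.1, (Finset.mem_inter.mp h.choose_spec).1⟩⟩
      else p.1 ⟨g.1, ⟨g.2.1, fun x hx => Finset.mem_compl.mpr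
        (fun hxT => h ⟨x, Finset.mem_inter.mpr ⟨hx, hxT⟩⟩)⟩⟩), fun ω => ?_⟩
    funext k
    simp only [hXU, hX, hY0, hVc, hD, hSU, hWt]
    refine congrArg (f k.1 (W k.1 ω)) ?_
    funext g'
    by_cases h : (g'.1 ∩ T').Nonempty
    · rw [dif_pos h]
    · rw [dif_neg h]
  have step_d : condEntr μ XU (fun ω => (SU ω, Y0 ω)) = 0 :=
    condEntr_eq_zero_of_det mXU (mSU.prodMk mY0) dXU_SUY0
  have step_c : condEntr μ XU Y0 ≤ condEntr μ SU Y0 := by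
    have h := condEntr_ge_sub (μ := μ) mSU mXU mY0
    rw [step_d] at h
    linarith
  have step_b : condEntr μ SU Y0 ≤ entr μ SU := condEntr_le_entr mSU mY0
  have step_a : entr μ SU ≤ ((K - T).choose G : ℝ) * ((LS : ℝ) * Real.log q) := by
    rw [← logSU]
    exact entr_le_log_card mSU
  -- (e) security step
  have hSec' : condEntr μ Wt Vc + condEntr μ Xt Vc
      - condEntr μ (fun ω => (Wt ω, Xt ω)) Vc = 0 := by
    have h := hSec
    unfold condMI at h
    exact h
  have chain1 : condEntr μ (fun ω => (Xt ω, Wt ω)) Vc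
      = condEntr μ Wt Vc + condEntr μ Xt Y0 := by
    have h := condEntr_chain (μ := μ) mXt mWt mVc
    rw [← hY0] at h
    exact h
  have swap1 : condEntr μ (fun ω => (Xt ω, Wt ω)) Vc
      = condEntr μ (fun ω => (Wt ω, Xt ω)) Vc :=
    condEntr_congr_left (mXt.prodMk mWt) (mWt.prodMk mXt) mVc
      ⟨fun p => (p.2, p.1), fun ω => rfl⟩ ⟨fun p => (p.2, p.1), fun ω => rfl⟩
  have hXtY0 : condEntr μ Xt Y0 = condEntr μ Xt Vc := by linarith
  -- decompose Xt into collusion and non-collusion parts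
  set XTc : Ω → ({k : Fin K // k ∈ T'} → (Fin LX → ZMod q)) :=
    fun ω => fun k => X k.1 ω with hXTc
  have dXTc : Det Base XTc := ⟨fun p => fun k => f k.1 (p.1 k.1) (fun g => p.2 ⟨g.1, g.2.1⟩),
    fun ω => by funext k; simp only [hXTc, hX, hBase, hWt, hSt]⟩
  have mXTc : Measurable XTc := mdet dXTc
  have dXt_to : Det Xt (fun ω => (XTc ω, XU ω)) :=
    ⟨fun x => (fun k => x k.1, fun k => x k.1), fun ω => rfl⟩
  have dXt_from : Det (fun ω => (XTc ω, XU ω)) Xt :=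
    ⟨fun p => fun k => if h : k ∈ T' then p.1 ⟨k, h⟩ else p.2 ⟨k, Finset.mem_compl.mpr h⟩,
      fun ω => by
        funext k
        by_cases h : k ∈ T'
        · simp [hXt, hXTc, h]
        · simp [hXt, hXU, h]⟩
  have decompVc : condEntr μ Xt Vc
      = condEntr μ XU Vc + condEntr μ XTc (fun ω => (XU ω, Vc ω)) := by
    have e1 : condEntr μ Xt Vc = condEntr μ (fun ω => (XTc ω, XU ω)) Vc :=
      (condEntr_congr_left (mXTc.prodMk mXU) mXt mVc dXt_from dXt_to).symm
    rw [e1, condEntr_chain mXTc mXU mVc]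
  have decompY0 : condEntr μ Xt Y0
      = condEntr μ XU Y0 + condEntr μ XTc (fun ω => (XU ω, Y0 ω)) := by
    have e1 : condEntr μ Xt Y0 = condEntr μ (fun ω => (XTc ω, XU ω)) Y0 :=
      (condEntr_congr_left (mXTc.prodMk mXU) mXt mY0 dXt_from dXt_to).symm
    rw [e1, condEntr_chain mXTc mXU mY0]
  have mono_e : condEntr μ XTc (fun ω => (XU ω, Y0 ω))
      ≤ condEntr μ XTc (fun ω => (XU ω, Vc ω)) :=
    condEntr_mono_cond mXTc (mXU.prodMk mVc) (mXU.prodMk mY0)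
      ⟨fun p => (p.1, p.2.2), fun ω => rfl⟩
  have step_e : condEntr μ XU Vc ≤ condEntr μ XU Y0 := by linarith
  -- (f)
  have chain_f : condEntr μ (fun ω => (XU ω, Sm ω)) D
      = condEntr μ Sm D + condEntr μ XU Vc := by
    have h := condEntr_chain (μ := μ) mXU mSm mD
    rw [← hVc] at h
    exact h
  have pair_f : condEntr μ XU D ≤ condEntr μ (fun ω => (XU ω, Sm ω)) D :=
    condEntr_le_pair_left mXU mSm mD
  have hSmD : condEntr μ Sm D ≤ (L : ℝ) * Real.log q := by
    calc condEntr μ Sm D ≤ entr μ Sm := condEntr_le_entr mSm mD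
      _ ≤ Real.log (Fintype.card (Fin L → ZMod q)) := entr_le_log_card mSm
      _ = L * Real.log q := logV
  have step_f : condEntr μ XU D - (L : ℝ) * Real.log q ≤ condEntr μ XU Vc := by linarith
  -- (g) the key induction
  have key_ind : ∀ A : Finset (Fin K), A ⊆ T'ᶜ →
      (A.card : ℝ) * ((L : ℝ) * Real.log q)
        ≤ condEntr μ (fun ω => fun k : {k : Fin K // k ∈ A} => X k.1 ω) D := by
    intro A
    induction A using Finset.induction_on with
    | empty =>
        intro _
        simp only [Finset.card_empty, Nat.cast_zero, zero_mul]
        exact condEntr_nonneg (mdet ⟨fun p => fun k => f k.1 (p.1 k.1)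
          (fun g => p.2 ⟨g.1, g.2.1⟩),
          fun ω => by funext k; simp only [hX, hBase, hWt, hSt]⟩) mD
    | @insert a A ha ih =>
        intro hins
        have haT : a ∉ T' := Finset.mem_compl.mp (hins (Finset.mem_insert_self a A))
        have hAsub : A ⊆ T'ᶜ := fun x hx => hins (Finset.mem_insert_of_mem hx)
        set XA : Ω → ({k : Fin K // k ∈ A} → (Fin LX → ZMod q)) :=
          fun ω => fun k => X k.1 ω with hXA
        set XI : Ω → ({k : Fin K // k ∈ insert a A} → (Fin LX → ZMod q)) :=
          fun ω => fun k => X k.1 ω with hXI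
        set Phi : Ω → (({j : Fin K // j ≠ a} → (Fin L → ZMod q)) ×
            ({g : Finset (Fin K) // g.card = G} → (Fin LS → ZMod q))) :=
          fun ω => ((fun j => W j.1 ω), St ω) with hPhi
        have dXA : Det Base XA := ⟨fun p => fun k => f k.1 (p.1 k.1)
          (fun g => p.2 ⟨g.1, g.2.1⟩),
          fun ω => by funext k; simp only [hXA, hX, hBase, hWt, hSt]⟩
        have mXA : Measurable XA := mdet dXA
        have dXI : Det Base XI := ⟨fun p => fun k => f k.1 (p.1 k.1)
          (fun g => p.2 ⟨g.1, g.2.1⟩),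
          fun ω => by funext k; simp only [hXI, hX, hBase, hWt, hSt]⟩
        have mXI : Measurable XI := mdet dXI
        have dPhi : Det Base Phi := ⟨fun p => ((fun j => p.1 j.1), p.2), fun ω => rfl⟩
        have mPhi : Measurable Phi := mdet dPhi
        have mXa : Measurable (X a) := hXmeas a
        have mWa : Measurable (W a) := hWmeas a
        -- split off user a
        have e1 : condEntr μ XI D = condEntr μ (fun ω => (X a ω, XA ω)) D := by
          apply condEntr_congr_left mXI (mXa.prodMk mXA) mD
          · exact ⟨fun x => (x ⟨a, Finset.mem_insert_self a A⟩,
              fun k => x ⟨k.1, Finset.mem_insert_of_mem k.2⟩), fun ω => rfl⟩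
          · refine ⟨fun p => fun k => if h : k.1 = a then p.1
              else p.2 ⟨k.1, (Finset.mem_insert.mp k.2).resolve_left h⟩, fun ω => ?_⟩
            funext k
            by_cases h : k.1 = a
            · simp [hXI, hXA, h]
            · simp only [hXI, hXA, dif_neg h]
        have hch2 : condEntr μ (fun ω => (X a ω, XA ω)) D
            = condEntr μ XA D + condEntr μ (X a) (fun ω => (XA ω, D ω)) :=
          condEntr_chain mXa mXA mD
        -- lower bound the new term via Phi
        have dPhitoXAD : Det Phi (fun ω => (XA ω, D ω)) := by
          refine ⟨fun p => ((fun k => f k.1 (p.1 ⟨k.1, fun h => ha (h ▸ k.2)⟩)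
              (fun g => p.2 ⟨g.1, g.2.1⟩)),
            (fun k => (p.1 ⟨k.1, fun h => haT (h ▸ k.2)⟩,
              fun g => p.2 ⟨g.1, g.2.1⟩))), fun ω => ?_⟩
          refine Prod.ext ?_ ?_
          · funext k; simp only [hXA, hX, hPhi, hSt]
          · funext k; simp only [hD, hPhi, hSt]
        have mono_g : condEntr μ (X a) Phi ≤ condEntr μ (X a) (fun ω => (XA ω, D ω)) :=
          condEntr_mono_cond mXa (mXA.prodMk mD) mPhi dPhitoXAD
        have hge : condEntr μ (W a) Phi - condEntr μ (W a) (fun ω => (X a ω, Phi ω))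
            ≤ condEntr μ (X a) Phi := condEntr_ge_sub mXa mWa mPhi
        -- H(W a | Phi) = L log q by uniformity + independence
        have hunif : condEntr μ (W a) Phi = (L : ℝ) * Real.log q := by
          rw [← logV]
          apply condEntr_eq_log_card mWa mPhi
          intro v y
          obtain ⟨w, s'⟩ := y
          have hwa : W a ⁻¹' {v} ∩ Phi ⁻¹' {(w, s')}
              = Wt ⁻¹' {fun j => if h : j = a then v else w ⟨j, h⟩} ∩ St ⁻¹' {s'} := by
            ext ω
            simp only [Set.mem_inter_iff, Set.mem_preimage, Set.mem_singleton_iff, hPhi, hWt,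
              Prod.ext_iff, funext_iff]
            constructor
            · rintro ⟨h1, h2, h3⟩
              refine ⟨fun j => ?_, h3⟩
              by_cases h : j = a
              · rw [dif_pos h, h]; exact h1
              · rw [dif_neg h]; exact h2 ⟨j, h⟩
            · rintro ⟨h1, h2⟩
              refine ⟨?_, fun j => ?_, h2⟩
              · have := h1 a; rw [dif_pos rfl] at this; exact this
              · have := h1 j.1; rw [dif_neg j.2] at this; exact this
          have hBw : Phi ⁻¹' {(w, s')}
              = Wt ⁻¹' {vv | ∀ j : {j : Fin K // j ≠ a}, vv j.1 = w j} ∩ St ⁻¹' {s'} := by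
            ext ω
            simp only [Set.mem_inter_iff, Set.mem_preimage, Set.mem_singleton_iff, hPhi, hWt,
              Prod.ext_iff, funext_iff, Set.mem_setOf_eq]
          have hind := indepFun_iff_measure_inter_preimage_eq_mul.mp hWSindep
          rw [hwa, hBw,
            hind {fun j => if h : j = a then v else w ⟨j, h⟩} {s'}
              (measurableSet_singleton _) (measurableSet_singleton _),
            hind {vv | ∀ j : {j : Fin K // j ≠ a}, vv j.1 = w j} {s'}
              MeasurableSet.of_discrete (measurableSet_singleton _)]
          have c1 : μ (Wt ⁻¹' {fun j => if h : j = a then v else w ⟨j, h⟩})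
              = ((Fintype.card (Fin L → ZMod q) : ENNReal))⁻¹ ^ K := by
            have hpre : Wt ⁻¹' {fun j => if h : j = a then v else w ⟨j, h⟩}
                = ⋂ k ∈ Finset.univ, W k ⁻¹' {if h : k = a then v else w ⟨k, h⟩} := by
              ext ω; simp [hWt, funext_iff]
            rw [hpre, iIndepFun_iff_measure_inter_preimage_eq_mul.mp hWindep Finset.univ
              (fun k _ => measurableSet_singleton _)]
            rw [Finset.prod_congr rfl (fun k _ => hWunif k _)]
            simp
          have c2 : μ (Wt ⁻¹' {vv | ∀ j : {j : Fin K // j ≠ a}, vv j.1 = w j})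
              = ((Fintype.card (Fin L → ZMod q) : ENNReal))⁻¹ ^ (K - 1) := by
            have hpre : Wt ⁻¹' {vv | ∀ j : {j : Fin K // j ≠ a}, vv j.1 = w j}
                = ⋂ j ∈ Finset.univ.erase a, W j ⁻¹'
                    (if h : j = a then Set.univ else {w ⟨j, h⟩}) := by
              ext ω
              simp only [Set.mem_preimage, Set.mem_setOf_eq, Set.mem_iInter, hWt]
              constructor
              · intro h j hj
                rw [dif_neg (Finset.ne_of_mem_erase hj)]
                exact h ⟨j, Finset.ne_of_mem_erase hj⟩
              · intro h j
                have hh := h j.1 (Finset.mem_erase.mpr ⟨j.2, Finset.mem_univ _⟩)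
                rw [dif_neg j.2] at hh
                exact hh
            rw [hpre, iIndepFun_iff_measure_inter_preimage_eq_mul.mp hWindep
              (Finset.univ.erase a)
              (fun k _ => by split_ifs; exacts [MeasurableSet.univ, measurableSet_singleton _])]
            have hval : ∀ j ∈ Finset.univ.erase a,
                μ (W j ⁻¹' (if h : j = a then Set.univ else {w ⟨j, h⟩}))
                  = (Fintype.card (Fin L → ZMod q) : ENNReal)⁻¹ := by
              intro j hj
              rw [dif_neg (Finset.ne_of_mem_erase hj)]
              exact hWunif j _
            rw [Finset.prod_congr rfl hval, Finset.prod_const,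
              Finset.card_erase_of_mem (Finset.mem_univ a), Finset.card_univ, Fintype.card_fin]
          rw [c1, c2]
          have hKpos : 0 < K := lt_of_lt_of_le (by norm_num) hK
          have hpow : ((Fintype.card (Fin L → ZMod q) : ENNReal))⁻¹ ^ K
              = (Fintype.card (Fin L → ZMod q) : ENNReal)⁻¹ *
                ((Fintype.card (Fin L → ZMod q) : ENNReal))⁻¹ ^ (K - 1) := by
            conv_lhs => rw [← Nat.succ_pred_eq_of_pos hKpos]
            rw [pow_succ, Nat.pred_eq_sub_one]
            ring
          rw [hpow]
          ring
        -- H(W a | X a, Phi) = 0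
        have dXt_from2 : Det (fun ω => (X a ω, Phi ω)) Xt := by
          refine ⟨fun p => fun k => if h : k = a then p.1
            else f k (p.2.1 ⟨k, h⟩) (fun g => p.2.2 ⟨g.1, g.2.1⟩), fun ω => ?_⟩
          funext k
          by_cases h : k = a
          · simp [hXt, h]
          · simp only [hXt, hX, hPhi, hSt, dif_neg h]
        have hSmzero : condEntr μ Sm (fun ω => (X a ω, Phi ω)) = 0 := by
          have hle : condEntr μ Sm (fun ω => (X a ω, Phi ω)) ≤ condEntr μ Sm Xt :=
            condEntr_mono_cond mSm mXt (mXa.prodMk mPhi) dXt_from2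
          rw [hCorrect] at hle
          exact le_antisymm hle (condEntr_nonneg mSm (mXa.prodMk mPhi))
        have det6c : Det (fun ω => (Sm ω, (X a ω, Phi ω))) (W a) := by
          refine ⟨fun p => p.1 - ∑ j : {j : Fin K // j ≠ a}, p.2.2.1 j, fun ω => ?_⟩
          show W a ω = Sm ω - ∑ j : {j : Fin K // j ≠ a}, W j.1 ω
          have hsum : ∑ j : {j : Fin K // j ≠ a}, W j.1 ω
              = ∑ j ∈ Finset.univ.erase a, W j ω :=
            (Finset.sum_subtype (Finset.univ.erase a)
              (fun x => by simp [Finset.mem_erase]) (fun j => W j ω)).symm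
          have hSm' : Sm ω = W a ω + ∑ j ∈ Finset.univ.erase a, W j ω := by
            rw [hSm]
            exact (Finset.add_sum_erase Finset.univ (fun k => W k ω)
              (Finset.mem_univ a)).symm
          rw [hsum, hSm']
          abel
        have zero6 : condEntr μ (W a) (fun ω => (X a ω, Phi ω)) = 0 := by
          have hch := condEntr_chain (μ := μ) (A := W a) (B := Sm)
            (C := fun ω => (X a ω, Phi ω)) mWa mSm (mXa.prodMk mPhi)
          have hz := condEntr_eq_zero_of_det (μ := μ) mWa
            (mSm.prodMk (mXa.prodMk mPhi)) det6c
          have hpl := condEntr_le_pair_left (μ := μ) (A := W a) (B := Sm)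
            (C := fun ω => (X a ω, Phi ω)) mWa mSm (mXa.prodMk mPhi)
          have hnn := condEntr_nonneg (μ := μ) mWa (mXa.prodMk mPhi)
          linarith
        -- combine the induction step
        have ihA := ih hAsub
        have hcard : (((insert a A).card : ℕ) : ℝ) = (A.card : ℝ) + 1 := by
          rw [Finset.card_insert_of_notMem ha]; push_cast; ring
        rw [e1, hch2, hcard]
        have hLlq : 0 ≤ (L : ℝ) * Real.log q := by positivity
        linarith
  -- assemble everything
  have main_g := key_ind T'ᶜ (Finset.Subset.refl _)
  rw [← hXU] at main_g
  have cardU : (((T'ᶜ : Finset (Fin K)).card : ℕ) : ℝ) = ((K - T : ℕ) : ℝ) := by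
    rw [Finset.card_compl, Fintype.card_fin, hT']
  rw [cardU] at main_g
  have hKT1 : 1 ≤ K - T := le_trans hG1 hGT
  have total : (((K - T : ℕ) : ℝ) - 1) * ((L : ℝ) * Real.log q)
      ≤ ((K - T).choose G : ℝ) * ((LS : ℝ) * Real.log q) := by linarith
  have hreal : (((K - T - 1 : ℕ) : ℝ)) * (L : ℝ)
      ≤ (((K - T).choose G : ℕ) : ℝ) * (LS : ℝ) := by
    have hc : ((K - T - 1 : ℕ) : ℝ) = ((K - T : ℕ) : ℝ) - 1 := by
      rw [Nat.cast_sub hKT1]; norm_num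
    rw [hc]
    have h1 : ((((K - T : ℕ) : ℝ) - 1) * (L : ℝ)) * Real.log q
        ≤ ((((K - T).choose G : ℕ) : ℝ) * (LS : ℝ)) * Real.log q := by
      calc ((((K - T : ℕ) : ℝ) - 1) * (L : ℝ)) * Real.log q
          = (((K - T : ℕ) : ℝ) - 1) * ((L : ℝ) * Real.log q) := by ring
        _ ≤ ((K - T).choose G : ℝ) * ((LS : ℝ) * Real.log q) := total
        _ = ((((K - T).choose G : ℕ) : ℝ) * (LS : ℝ)) * Real.log q := by ring
    exact le_of_mul_le_mul_right h1 hlq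
  exact_mod_cast hreal
end
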